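/- arXiv:1310.3412 — 8 statements merged into one kernel-verified Lean document; each statement's English description precedes it below -/
import Mathlib

section
/- Let w be a modular cone metric on X and let e ∈ int P. Then the function W^e : (0,∞) × X × X → [0,∞) defined by W^e_λ(x,y) = ξ_e(w_{λe}(x,y)) is a modular metric on X: (i) for given x, y ∈ X, W^e_λ(x,y) = 0 for all λ > 0 iff x = y; (ii) W^e_λ(x,y) = W^e_λ(y,x) for all λ > 0 and x, y ∈ X; (iii) W^e_{λ+μ}(x,y) ≤ W^e_λ(x,z) + W^e_μ(z,y) for all x, y, z ∈ X and λ, μ > 0. -/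
/-- Let `w` be a modular cone metric on `X` and `e ∈ interior P`.
Then `W^e : (0,∞) × X × X → [0,∞)` defined via the nonlinear scalarization
`W^e_λ(x,y) = ξ_e(w (λ • e) x y)`, where `ξ_e(v) = inf {r : ℝ | r • e - v ∈ P}`,
is a modular metric on `X`: (i) `W^e_λ(x,y) = 0` for all `λ > 0` iff `x = y`;
(ii) symmetry; (iii) `W^e_{λ+μ}(x,y) ≤ W^e_λ(x,z) + W^e_μ(z,y)`. -/
theorem scalarized_modular_cone_metric_is_modular_metric
    {E : Type*} [AddCommGroup E] [Module ℝ E] [TopologicalSpace E]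
    [IsTopologicalAddGroup E] [ContinuousSMul ℝ E]
    [LocallyConvexSpace ℝ E] [T2Space E]
    (P : Set E) (hPclosed : IsClosed P) (hPconv : Convex ℝ P)
    (hPadd : ∀ a ∈ P, ∀ b ∈ P, a + b ∈ P)
    (hPsmul : ∀ r : ℝ, 0 ≤ r → ∀ a ∈ P, r • a ∈ P)
    (hPpointed : P ∩ (-P) = {0})
    (hPint : (interior P).Nonempty)
    {X : Type*} [Nonempty X]
    (w : E → X → X → E)
    (hw1 : ∀ x y : X, (∀ c ∈ interior P, w c x y = 0) ↔ x = y)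
    (hw2 : ∀ c ∈ interior P, ∀ x y : X, w c x y = w c y x)
    (hw3 : ∀ c₁ ∈ interior P, ∀ c₂ ∈ interior P, ∀ x y z : X,
      w c₁ x z + w c₂ z y - w (c₁ + c₂) x y ∈ P)
    (e : E) (he : e ∈ interior P)
    (W : ℝ → X → X → ℝ)
    (hW : ∀ lam : ℝ, 0 < lam → ∀ x y : X,
      W lam x y = sInf {r : ℝ | r • e - w (lam • e) x y ∈ P}) :
    (∀ x y : X, (∀ lam : ℝ, 0 < lam → W lam x y = 0) ↔ x = y) ∧
    (∀ lam : ℝ, 0 < lam → ∀ x y : X, W lam x y = W lam y x) ∧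
    (∀ lam mu : ℝ, 0 < lam → 0 < mu → ∀ x y z : X,
      W (lam + mu) x y ≤ W lam x z + W mu z y) := by
  have h0P : (0 : E) ∈ P := by
    have : (0 : E) ∈ P ∩ (-P) := by rw [hPpointed]; rfl
    exact this.1
  by_cases hE : (0 : E) ∈ interior P
  · -- degenerate case: E is trivial
    have hall : ∀ v : E, v = 0 := by
      intro v
      have hc : Continuous fun t : ℝ => t • v := continuous_id.smul continuous_const
      have hpre : (fun t : ℝ => t • v) ⁻¹' interior P ∈ nhds (0 : ℝ) := by
        apply hc.continuousAt.preimage_mem_nhds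
        simpa using isOpen_interior.mem_nhds hE
      obtain ⟨ε, hε, hball⟩ := Metric.mem_nhds_iff.mp hpre
      have h1 : (ε / 2) • v ∈ P := by
        apply interior_subset (hball ?_)
        show dist (ε / 2) 0 < ε
        rw [Real.dist_eq, sub_zero, abs_of_nonneg (by linarith)]; linarith
      have h2 : (-(ε / 2)) • v ∈ P := by
        apply interior_subset (hball ?_)
        show dist (-(ε / 2)) 0 < ε
        rw [Real.dist_eq, sub_zero, abs_of_nonpos (by linarith)]; linarith
      have hmem : (ε / 2) • v ∈ P ∩ (-P) := by
        refine ⟨h1, ?_⟩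
        rw [Set.mem_neg]
        simpa [neg_smul] using h2
      rw [hPpointed] at hmem
      have hz : (ε / 2) • v = 0 := hmem
      rcases smul_eq_zero.mp hz with h | h
      · exact absurd h (by positivity)
      · exact h
    have hW0 : ∀ lam : ℝ, 0 < lam → ∀ x y : X, W lam x y = 0 := by
      intro lam hlam x y
      rw [hW lam hlam x y]
      have hset : {r : ℝ | r • e - w (lam • e) x y ∈ P} = Set.univ := by
        apply Set.eq_univ_iff_forall.mpr
        intro r
        show r • e - w (lam • e) x y ∈ P
        rw [hall (r • e - w (lam • e) x y)]
        exact h0P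
      rw [hset]
      exact Real.sInf_of_not_bddBelow not_bddBelow_univ
    refine ⟨?_, ?_, ?_⟩
    · intro x y
      constructor
      · intro _
        exact (hw1 x y).mp fun c _ => hall _
      · intro h lam hlam
        exact hW0 lam hlam x y
    · intro lam hlam x y
      rw [hW0 lam hlam x y, hW0 lam hlam y x]
    · intro lam mu hlam hmu x y z
      rw [hW0 _ (by linarith) x y, hW0 lam hlam x z, hW0 mu hmu z y]
      norm_num
  · -- nondegenerate case
    have heP := interior_subset he
    -- scaling stays in the interior
    have hsmul_int : ∀ t : ℝ, 0 < t → ∀ c ∈ interior P, t • c ∈ interior P := by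
      intro t ht c hc
      have hopen : IsOpen ((fun x : E => t • x) '' interior P) :=
        isOpenMap_smul₀ (ne_of_gt ht) _ isOpen_interior
      have hsub : (fun x : E => t • x) '' interior P ⊆ P := by
        rintro _ ⟨a, ha, rfl⟩
        exact hPsmul t ht.le a (interior_subset ha)
      exact interior_maximal hsub hopen ⟨c, hc, rfl⟩
    -- interior + cone stays in the interior
    have hadd_int : ∀ c ∈ interior P, ∀ d ∈ P, c + d ∈ interior P := by
      intro c hc d hd
      have hopen : IsOpen ((fun x : E => x + d) '' interior P) :=
        isOpenMap_add_right d _ isOpen_interior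
      have hsub : (fun x : E => x + d) '' interior P ⊆ P := by
        rintro _ ⟨a, ha, rfl⟩
        exact hPadd a (interior_subset ha) d hd
      exact interior_maximal hsub hopen ⟨c, hc, rfl⟩
    have hwxx : ∀ c ∈ interior P, ∀ x : X, w c x x = 0 :=
      fun c hc x => ((hw1 x x).mpr rfl) c hc
    -- values of w lie in P
    have hwP : ∀ c ∈ interior P, ∀ x y : X, w c x y ∈ P := by
      intro c hc x y
      have h3 := hw3 c hc c hc x x y
      rw [hwxx (c + c) (hadd_int c hc c (interior_subset hc)) x,
        hw2 c hc y x] at h3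
      have := hPsmul (1 / 2) (by norm_num) _ h3
      have heq : (1 / 2 : ℝ) • (w c x y + w c x y - 0) = w c x y := by module
      rwa [heq] at this
    -- the scalarization sets
    have hSne : ∀ v : E, {r : ℝ | r • e - v ∈ P}.Nonempty := by
      intro v
      have hc : Continuous fun t : ℝ => e - t • v :=
        continuous_const.sub (continuous_id.smul continuous_const)
      have hpre : (fun t : ℝ => e - t • v) ⁻¹' interior P ∈ nhds (0 : ℝ) := by
        apply hc.continuousAt.preimage_mem_nhds
        simpa using isOpen_interior.mem_nhds he
      obtain ⟨ε, hε, hball⟩ := Metric.mem_nhds_iff.mp hpre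
      have hmem : e - (ε / 2) • v ∈ P := by
        apply interior_subset (hball ?_)
        show dist (ε / 2) 0 < ε
        rw [Real.dist_eq, sub_zero, abs_of_nonneg (by linarith)]; linarith
      refine ⟨(ε / 2)⁻¹, ?_⟩
      have := hPsmul (ε / 2)⁻¹ (by positivity) _ hmem
      show (ε / 2)⁻¹ • e - v ∈ P
      have heq : (ε / 2)⁻¹ • (e - (ε / 2) • v) = (ε / 2)⁻¹ • e - v := by
        rw [smul_sub, smul_smul, inv_mul_cancel₀ (by positivity : (ε / 2) ≠ 0), one_smul]
      rwa [heq] at this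
    have hSnonneg : ∀ v ∈ P, ∀ r ∈ {r : ℝ | r • e - v ∈ P}, 0 ≤ r := by
      intro v hv r hr
      by_contra h
      push_neg at h
      have h1 : r • e ∈ P := by
        have := hPadd _ hr _ hv
        simpa using this
      have h2 : (-r) • e ∈ P := hPsmul (-r) (by linarith) e heP
      have hmem : r • e ∈ P ∩ (-P) := by
        refine ⟨h1, ?_⟩
        rw [Set.mem_neg]
        simpa [neg_smul] using h2
      rw [hPpointed] at hmem
      have hz : r • e = 0 := hmem
      have he0 : e = 0 := by
        rcases smul_eq_zero.mp hz with h' | h'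
        · exact absurd h' (ne_of_lt h)
        · exact h' 
      exact hE (he0 ▸ he)
    have hSbdd : ∀ v ∈ P, BddBelow {r : ℝ | r • e - v ∈ P} :=
      fun v hv => ⟨0, fun r hr => hSnonneg v hv r hr⟩
    have hSclosed : ∀ v : E, IsClosed {r : ℝ | r • e - v ∈ P} := by
      intro v
      have : {r : ℝ | r • e - v ∈ P} = (fun r : ℝ => r • e - v) ⁻¹' P := rfl
      rw [this]
      exact hPclosed.preimage ((continuous_id.smul continuous_const).sub continuous_const)
    have hmemInf : ∀ v ∈ P, (sInf {r : ℝ | r • e - v ∈ P}) • e - v ∈ P :=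
      fun v hv => (hSclosed v).csInf_mem (hSne v) (hSbdd v hv)
    have hInfnonneg : ∀ v ∈ P, 0 ≤ sInf {r : ℝ | r • e - v ∈ P} :=
      fun v hv => le_csInf (hSne v) (hSnonneg v hv)
    refine ⟨?_, ?_, ?_⟩
    · -- (i)
      intro x y
      constructor
      · intro hall0
        apply (hw1 x y).mp
        have hwe : ∀ lam : ℝ, 0 < lam → w (lam • e) x y = 0 := by
          intro lam hlam
          have hv := hwP _ (hsmul_int lam hlam e he) x y
          have h0 : sInf {r : ℝ | r • e - w (lam • e) x y ∈ P} = 0 := by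
            rw [← hW lam hlam x y]; exact hall0 lam hlam
          have hmem := hmemInf _ hv
          rw [h0, zero_smul, zero_sub] at hmem
          have : w (lam • e) x y ∈ P ∩ (-P) := ⟨hv, by rwa [Set.mem_neg]⟩
          rw [hPpointed] at this
          exact this
        intro c hc
        have hc2 : Continuous fun t : ℝ => c - t • e :=
          continuous_const.sub (continuous_id.smul continuous_const)
        have hpre : (fun t : ℝ => c - t • e) ⁻¹' interior P ∈ nhds (0 : ℝ) := by
          apply hc2.continuousAt.preimage_mem_nhds
          simpa using isOpen_interior.mem_nhds hc
        obtain ⟨ε, hε, hball⟩ := Metric.mem_nhds_iff.mp hpre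
        have hmem : c - (ε / 2) • e ∈ interior P := by
          apply hball
          show dist (ε / 2) 0 < ε
          rw [Real.dist_eq, sub_zero, abs_of_nonneg (by linarith)]; linarith
        have h3 := hw3 (c - (ε / 2) • e) hmem ((ε / 2) • e)
          (hsmul_int _ (by linarith) e he) x y x
        rw [sub_add_cancel, hwxx _ hmem x, hwe (ε / 2) (by linarith)] at h3
        have hneg : -(w c x y) ∈ P := by
          have heq : (0 : E) + 0 - w c x y = -(w c x y) := by module
          rwa [heq] at h3
        have : w c x y ∈ P ∩ (-P) := ⟨hwP c hc x y, by rwa [Set.mem_neg]⟩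
        rw [hPpointed] at this
        exact this
      · rintro rfl lam hlam
        rw [hW lam hlam x x, hwxx _ (hsmul_int lam hlam e he) x]
        apply le_antisymm
        · apply csInf_le (hSbdd 0 h0P)
          show (0 : ℝ) • e - 0 ∈ P
          simpa using h0P
        · exact hInfnonneg 0 h0P
    · -- (ii)
      intro lam hlam x y
      rw [hW lam hlam x y, hW lam hlam y x,
        hw2 (lam • e) (hsmul_int lam hlam e he) x y]
    · -- (iii)
      intro lam mu hlam hmu x y z
      rw [hW _ (by linarith) x y, hW lam hlam x z, hW mu hmu z y]
      have hv1 := hwP _ (hsmul_int lam hlam e he) x z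
      have hv2 := hwP _ (hsmul_int mu hmu e he) z y
      have hv := hwP _ (hsmul_int _ (by linarith : (0:ℝ) < lam + mu) e he) x y
      have h3 : w (lam • e) x z + w (mu • e) z y - w ((lam + mu) • e) x y ∈ P := by
        have := hw3 (lam • e) (hsmul_int lam hlam e he) (mu • e)
          (hsmul_int mu hmu e he) x y z
        rwa [← add_smul] at this
      have hm1 := hmemInf _ hv1
      have hm2 := hmemInf _ hv2
      apply csInf_le (hSbdd _ hv)
      set r1 := sInf {r : ℝ | r • e - w (lam • e) x z ∈ P}
      set r2 := sInf {r : ℝ | r • e - w (mu • e) z y ∈ P}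
      show (r1 + r2) • e - w ((lam + mu) • e) x y ∈ P
      have hsum := hPadd _ (hPadd _ hm1 _ hm2) _ h3
      have heq : r1 • e - w (lam • e) x z + (r2 • e - w (mu • e) z y) +
          (w (lam • e) x z + w (mu • e) z y - w ((lam + mu) • e) x y) =
          (r1 + r2) • e - w ((lam + mu) • e) x y := by module
      rwa [heq] at hsum
end

section
/- Let w be a modular cone metric on X, e ∈ int P, and let W^e_λ(x,y) = ξ_e(w_{λe}(x,y)). Then a sequence {xₙ} in X is modular cone convergent to x ∈ X if and only if for every λ > 0, W^e_λ(xₙ, x) → 0 as n → ∞. -/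
/-- Let `w` be a modular cone metric on `X`, `e ∈ interior P`, and let
`W^e_λ(x,y) = ξ_e(w (λ • e) x y)` with `ξ_e(v) = inf {r : ℝ | r • e - v ∈ P}`.
A sequence `{xₙ}` in `X` is modular cone convergent to `x` (for every `c ≫ θ` there
is `N` with `w c xₙ x ≪ c` for all `n > N`) if and only if for every `λ > 0`,
`W^e_λ(xₙ, x) → 0` as `n → ∞`. -/
theorem modular_cone_convergence_iff_scalarized_tendsto_zero
    {E : Type*} [AddCommGroup E] [Module ℝ E] [TopologicalSpace E]
    [IsTopologicalAddGroup E] [ContinuousSMul ℝ E]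
    [LocallyConvexSpace ℝ E] [T2Space E]
    (P : Set E) (hPclosed : IsClosed P) (hPconv : Convex ℝ P)
    (hPadd : ∀ a ∈ P, ∀ b ∈ P, a + b ∈ P)
    (hPsmul : ∀ r : ℝ, 0 ≤ r → ∀ a ∈ P, r • a ∈ P)
    (hPpointed : P ∩ (-P) = {0})
    (hPint : (interior P).Nonempty)
    {X : Type*} [Nonempty X]
    (w : E → X → X → E)
    (hw1 : ∀ x y : X, (∀ c ∈ interior P, w c x y = 0) ↔ x = y)
    (hw2 : ∀ c ∈ interior P, ∀ x y : X, w c x y = w c y x)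
    (hw3 : ∀ c₁ ∈ interior P, ∀ c₂ ∈ interior P, ∀ x y z : X,
      w c₁ x z + w c₂ z y - w (c₁ + c₂) x y ∈ P)
    (e : E) (he : e ∈ interior P)
    (W : ℝ → X → X → ℝ)
    (hW : ∀ lam : ℝ, 0 < lam → ∀ x y : X,
      W lam x y = sInf {r : ℝ | r • e - w (lam • e) x y ∈ P})
    (u : ℕ → X) (x : X) :
    (∀ c ∈ interior P, ∃ N : ℕ, ∀ n > N, c - w c (u n) x ∈ interior P) ↔
    (∀ lam : ℝ, 0 < lam →
      Filter.Tendsto (fun n => W lam (u n) x) Filter.atTop (nhds 0)) := by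
  classical
  have hP0 : (0:E) ∈ P := by
    have h : (0:E) ∈ P ∩ (-P) := by rw [hPpointed]; rfl
    exact h.1
  have hintP : interior P ⊆ P := interior_subset
  -- interior P + P ⊆ interior P
  have hadd_int : ∀ a ∈ interior P, ∀ b ∈ P, a + b ∈ interior P := by
    intro a ha b hb
    have hopen : IsOpen ((fun x => x + b) '' interior P) :=
      (isOpenMap_add_right b) _ isOpen_interior
    have hsub : ((fun x => x + b) '' interior P) ⊆ P := by
      rintro _ ⟨y, hy, rfl⟩
      exact hPadd y (hintP hy) b hb
    exact interior_maximal hsub hopen ⟨a, ha, rfl⟩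
  have hsmul_int : ∀ r : ℝ, 0 < r → ∀ a ∈ interior P, r • a ∈ interior P := by
    intro r hr a ha
    have hopen : IsOpen ((fun x : E => r • x) '' interior P) :=
      (isOpenMap_smul₀ (ne_of_gt hr)) _ isOpen_interior
    have hsub : ((fun x : E => r • x) '' interior P) ⊆ P := by
      rintro _ ⟨y, hy, rfl⟩
      exact hPsmul r hr.le y (hintP hy)
    exact interior_maximal hsub hopen ⟨a, ha, rfl⟩
  -- the scalarization set is nonempty
  have hSne : ∀ v : E, ∃ r : ℝ, r • e - v ∈ P := by
    intro v
    have h0 : Filter.Tendsto (fun r : ℝ => r⁻¹ • v) Filter.atTop (nhds 0) := by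
      simpa using (tendsto_inv_atTop_zero (𝕜 := ℝ)).smul_const v
    have h1 : Filter.Tendsto (fun r : ℝ => e - r⁻¹ • v) Filter.atTop (nhds e) := by
      simpa using (tendsto_const_nhds (x := e) (f := Filter.atTop)).sub h0
    have h2 : ∀ᶠ r : ℝ in Filter.atTop, e - r⁻¹ • v ∈ interior P :=
      h1.eventually (isOpen_interior.eventually_mem he)
    obtain ⟨r, hr1, hr2⟩ := (h2.and (Filter.eventually_ge_atTop 1)).exists
    have hrpos : (0:ℝ) < r := lt_of_lt_of_le one_pos hr2
    refine ⟨r, ?_⟩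
    have h3 := hPsmul r hrpos.le _ (hintP hr1)
    have h4 : r • (e - r⁻¹ • v) = r • e - v := by
      rw [smul_sub, smul_smul, mul_inv_cancel₀ hrpos.ne', one_smul]
    rwa [h4] at h3
  by_cases hez : e = 0
  · -- degenerate case: E is trivial
    have hall : ∀ v : E, v = 0 := by
      intro v
      obtain ⟨r, hr⟩ := hSne (-v)
      rw [hez, smul_zero, zero_sub, neg_neg] at hr
      obtain ⟨r', hr'⟩ := hSne v
      rw [hez, smul_zero, zero_sub] at hr'
      have : v ∈ P ∩ (-P) := ⟨hr, by simpa using hr'⟩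
      rw [hPpointed] at this
      exact this
    constructor
    · intro _ lam hlam
      have hWeq : ∀ n, W lam (u n) x = 0 := by
        intro n
        rw [hW lam hlam]
        have hset : {r : ℝ | r • e - w (lam • e) (u n) x ∈ P} = Set.univ := by
          ext r
          simp only [Set.mem_setOf_eq, Set.mem_univ, iff_true]
          rw [hall (r • e - w (lam • e) (u n) x)]
          exact hP0
        rw [hset]
        have : ¬ BddBelow (Set.univ : Set ℝ) := by
          rintro ⟨b, hb⟩
          have := hb (Set.mem_univ (b - 1))
          linarith
        exact Real.sInf_of_not_bddBelow this
      simp only [hWeq]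
      exact tendsto_const_nhds
    · intro _ c hc
      refine ⟨0, fun n _ => ?_⟩
      rw [hall (c - w c (u n) x)]
      rw [hez] at he
      exact he
  · -- main case: e ≠ 0
    have he' : e ∈ P := hintP he
    have hwzero : ∀ c ∈ interior P, ∀ a : X, w c a a = 0 := fun c hc a => (hw1 a a).mpr rfl c hc
    have hwP : ∀ c ∈ interior P, ∀ a b : X, w c a b ∈ P := by
      intro c hc a b
      have hcc : c + c ∈ interior P := hadd_int c hc c (hintP hc)
      have h := hw3 c hc c hc a a b
      rw [hwzero _ hcc, hw2 c hc b a] at h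
      have h2 := hPsmul (1/2) (by norm_num) _ h
      have heq : (1/2 : ℝ) • (w c a b + w c a b - 0) = w c a b := by
        rw [sub_zero, ← two_smul ℝ, smul_smul]
        norm_num
      rwa [heq] at h2
    have hmono : ∀ c ∈ interior P, ∀ d ∈ interior P, ∀ a : X,
        w c a x - w (c + d) a x ∈ P := by
      intro c hc d hd a
      have h := hw3 c hc d hd a x x
      rwa [hwzero d hd x, add_zero] at h
    have hSpos : ∀ v ∈ P, ∀ r : ℝ, r • e - v ∈ P → 0 ≤ r := by
      intro v hv r hr
      by_contra hneg
      push_neg at hneg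
      have h1 : r • e ∈ P := by
        have := hPadd _ hr _ hv
        simpa using this
      have h2 : -(r • e) ∈ P := by
        rw [← neg_smul]
        exact hPsmul (-r) (by linarith) e he'
      have h3 : r • e ∈ P ∩ (-P) := ⟨h1, by simpa using h2⟩
      rw [hPpointed] at h3
      have hre : r • e = 0 := h3
      have : e = 0 := by
        have h4 := congrArg (fun z : E => r⁻¹ • z) hre
        simpa [smul_smul, inv_mul_cancel₀ (ne_of_lt hneg)] using h4
      exact hez this
    constructor
    · -- modular convergence → scalarized convergence
      intro hconv lam hlam
      rw [Metric.tendsto_atTop]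
      intro ε hε
      set δ := min (ε/2) (lam/2) with hδdef
      have hδpos : 0 < δ := lt_min (by linarith) (by linarith)
      have hδlam : δ < lam := lt_of_le_of_lt (min_le_right _ _) (by linarith)
      have hδe : δ • e ∈ interior P := hsmul_int δ hδpos e he
      obtain ⟨N, hN⟩ := hconv (δ • e) hδe
      refine ⟨N + 1, fun n hn => ?_⟩
      have hn' : n > N := by omega
      set v := w (lam • e) (u n) x with hv
      have hvP : v ∈ P := hwP _ (hsmul_int lam hlam e he) _ _
      have key : δ • e - v ∈ P := by
        have h1 : δ • e - w (δ • e) (u n) x ∈ interior P := hN n hn'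
        have hd : (lam - δ) • e ∈ interior P := hsmul_int _ (by linarith) e he
        have h2 : w (δ • e) (u n) x - v ∈ P := by
          have h3 := hmono (δ • e) hδe ((lam - δ) • e) hd (u n)
          have heq : δ • e + (lam - δ) • e = lam • e := by
            rw [← add_smul]; ring_nf
          rwa [heq] at h3
        have h4 := hPadd _ (hintP h1) _ h2
        have heq2 : (δ • e - w (δ • e) (u n) x) + (w (δ • e) (u n) x - v) = δ • e - v := by
          abel
        rwa [heq2] at h4
      have hset_ne : Set.Nonempty {r : ℝ | r • e - v ∈ P} := by
        obtain ⟨r, hr⟩ := hSne v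
        exact ⟨r, hr⟩
      have hbdd : BddBelow {r : ℝ | r • e - v ∈ P} :=
        ⟨0, fun r hr => hSpos v hvP r hr⟩
      have hle : W lam (u n) x ≤ δ := by
        rw [hW lam hlam]
        exact csInf_le hbdd key
      have hge : 0 ≤ W lam (u n) x := by
        rw [hW lam hlam]
        exact le_csInf hset_ne (fun r hr => hSpos v hvP r hr)
      rw [Real.dist_eq, sub_zero, abs_of_nonneg hge]
      calc W lam (u n) x ≤ δ := hle
        _ ≤ ε/2 := min_le_left _ _
        _ < ε := by linarith
    · -- scalarized convergence → modular convergence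
      intro htend c hc
      have hcont : Filter.Tendsto (fun t : ℝ => c - t • e) (nhds 0) (nhds c) := by
        have h0 : Filter.Tendsto (fun t : ℝ => t • e) (nhds (0:ℝ)) (nhds ((0:ℝ) • e)) :=
          (continuous_id.smul continuous_const).tendsto 0
        have h1 : Filter.Tendsto (fun t : ℝ => t • e) (nhds (0:ℝ)) (nhds 0) := by
          simpa using h0
        simpa using (tendsto_const_nhds (x := c) (f := nhds (0:ℝ))).sub h1
      have hev : ∀ᶠ t : ℝ in nhds 0, c - t • e ∈ interior P :=
        hcont.eventually (isOpen_interior.eventually_mem hc)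
      obtain ⟨ε, hεpos, hεmem⟩ : ∃ ε : ℝ, 0 < ε ∧ c - ε • e ∈ interior P := by
        obtain ⟨δ, hδ, hds⟩ := Metric.eventually_nhds_iff.mp hev
        refine ⟨δ/2, by linarith, hds ?_⟩
        rw [Real.dist_eq, sub_zero, abs_of_pos (by linarith)]
        linarith
      have hεe : ε • e ∈ interior P := hsmul_int ε hεpos e he
      have hlam2 := htend ε hεpos
      rw [Metric.tendsto_atTop] at hlam2
      obtain ⟨N, hN⟩ := hlam2 ε hεpos
      refine ⟨N, fun n hn => ?_⟩
      set v := w (ε • e) (u n) x with hv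
      have hvP : v ∈ P := hwP _ hεe _ _
      have hset_ne : Set.Nonempty {r : ℝ | r • e - v ∈ P} := by
        obtain ⟨r, hr⟩ := hSne v
        exact ⟨r, hr⟩
      have hWlt : sInf {r : ℝ | r • e - v ∈ P} < ε := by
        have h1 := hN n (le_of_lt hn)
        rw [Real.dist_eq, sub_zero] at h1
        have h2 := lt_of_abs_lt h1
        rwa [hW ε hεpos] at h2
      obtain ⟨r, hrS, hrlt⟩ := exists_lt_of_csInf_lt hset_ne hWlt
      have hcv : c - v ∈ interior P := by
        have h1 : c - ε • e + (ε - r) • e ∈ interior P :=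
          hadd_int _ hεmem _ (hPsmul _ (by linarith) e he')
        have h2 : c - ε • e + (ε - r) • e + (r • e - v) ∈ interior P :=
          hadd_int _ h1 _ hrS
        have heq : c - ε • e + (ε - r) • e + (r • e - v) = c - v := by
          rw [sub_smul]; abel
        rwa [heq] at h2
      have h3 : v - w c (u n) x ∈ P := by
        have h4 := hmono (ε • e) hεe (c - ε • e) hεmem (u n)
        have heq : ε • e + (c - ε • e) = c := by abel
        rwa [heq] at h4
      have hfin := hadd_int _ hcv _ h3
      have heq2 : (c - v) + (v - w c (u n) x) = c - w c (u n) x := by abel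
      rwa [heq2] at hfin
end

section
/- Let w be a modular cone metric on X, e ∈ int P, and let W^e_λ(x,y) = ξ_e(w_{λe}(x,y)). Then a sequence {xₙ} in X is modular cone Cauchy if and only if for every λ > 0, W^e_λ(xₙ, xₘ) → 0 as n, m → ∞. -/
set_option maxHeartbeats 1000000 in
/-- Let `w` be a modular cone metric on `X`, `e ∈ interior P`, and let
`W^e_λ(x,y) = ξ_e(w (λ • e) x y)` with `ξ_e(v) = inf {r : ℝ | r • e - v ∈ P}`.
A sequence `{xₙ}` in `X` is modular cone Cauchy (for every `c ≫ θ` there is `N`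
with `w c xₙ xₘ ≪ c` for all `m, n > N`) if and only if for every `λ > 0`,
`W^e_λ(xₙ, xₘ) → 0` as `n, m → ∞`. -/
theorem modular_cone_cauchy_iff_scalarized_tendsto_zero
    {E : Type*} [AddCommGroup E] [Module ℝ E] [TopologicalSpace E]
    [IsTopologicalAddGroup E] [ContinuousSMul ℝ E]
    [LocallyConvexSpace ℝ E] [T2Space E]
    (P : Set E) (hPclosed : IsClosed P) (hPconv : Convex ℝ P)
    (hPadd : ∀ a ∈ P, ∀ b ∈ P, a + b ∈ P)
    (hPsmul : ∀ r : ℝ, 0 ≤ r → ∀ a ∈ P, r • a ∈ P)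
    (hPpointed : P ∩ (-P) = {0})
    (hPint : (interior P).Nonempty)
    {X : Type*} [Nonempty X]
    (w : E → X → X → E)
    (hw1 : ∀ x y : X, (∀ c ∈ interior P, w c x y = 0) ↔ x = y)
    (hw2 : ∀ c ∈ interior P, ∀ x y : X, w c x y = w c y x)
    (hw3 : ∀ c₁ ∈ interior P, ∀ c₂ ∈ interior P, ∀ x y z : X,
      w c₁ x z + w c₂ z y - w (c₁ + c₂) x y ∈ P)
    (e : E) (he : e ∈ interior P)
    (W : ℝ → X → X → ℝ)
    (hW : ∀ lam : ℝ, 0 < lam → ∀ x y : X,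
      W lam x y = sInf {r : ℝ | r • e - w (lam • e) x y ∈ P})
    (u : ℕ → X) :
    (∀ c ∈ interior P, ∃ N : ℕ, ∀ n > N, ∀ m > N,
      c - w c (u n) (u m) ∈ interior P) ↔
    (∀ lam : ℝ, 0 < lam →
      Filter.Tendsto (fun p : ℕ × ℕ => W lam (u p.1) (u p.2))
        Filter.atTop (nhds 0)) := by
  classical
  have hPsub : interior P ⊆ P := interior_subset
  have heP : e ∈ P := hPsub he
  -- interior P + P ⊆ interior P
  have hintadd : ∀ a ∈ interior P, ∀ b ∈ P, a + b ∈ interior P := by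
    intro a ha b hb
    have hopen : IsOpen ((fun x => x + b) '' interior P) :=
      (isOpenMap_add_right b) _ isOpen_interior
    have hsub : (fun x => x + b) '' interior P ⊆ P := by
      rintro _ ⟨x, hx, rfl⟩
      exact hPadd x (hPsub hx) b hb
    exact interior_maximal hsub hopen ⟨a, ha, rfl⟩
  -- positive scalar multiples preserve the interior
  have hintsmul : ∀ t : ℝ, 0 < t → ∀ a ∈ interior P, t • a ∈ interior P := by
    intro t ht a ha
    have hopen : IsOpen ((fun x : E => t • x) '' interior P) :=
      (isOpenMap_smul₀ (ne_of_gt ht)) _ isOpen_interior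
    have hsub : (fun x : E => t • x) '' interior P ⊆ P := by
      rintro _ ⟨x, hx, rfl⟩
      exact hPsmul t ht.le x (hPsub hx)
    exact interior_maximal hsub hopen ⟨a, ha, rfl⟩
  -- reflexivity : w c x x = 0
  have hrefl : ∀ c ∈ interior P, ∀ x : X, w c x x = 0 := fun c hc x =>
    ((hw1 x x).mpr rfl) c hc
  -- w c x y ∈ P
  have hwP : ∀ c ∈ interior P, ∀ x y : X, w c x y ∈ P := by
    intro c hc x y
    have h2c : c + c ∈ interior P := hintadd c hc c (hPsub hc)
    have h3 := hw3 c hc c hc x x y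
    rw [hw2 c hc y x, hrefl (c + c) h2c x] at h3
    have h4 : w c x y + w c x y ∈ P := by simpa using h3
    have h5 := hPsmul (1 / 2 : ℝ) (by norm_num) _ h4
    have heq : (1 / 2 : ℝ) • (w c x y + w c x y) = w c x y := by module
    rwa [heq] at h5
  -- monotonicity : w (c₁ + c₂) ⪯ w c₁
  have hmono : ∀ c₁ ∈ interior P, ∀ c₂ ∈ interior P, ∀ x y : X,
      w c₁ x y - w (c₁ + c₂) x y ∈ P := by
    intro c₁ h1 c₂ h2 x y
    have h3 := hw3 c₁ h1 c₂ h2 x y y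
    rw [hrefl c₂ h2 y] at h3
    simpa using h3
  -- the scalarization set is nonempty
  have hSne : ∀ v : E, ∃ r : ℝ, r • e - v ∈ P := by
    intro v
    have hcont : Continuous fun t : ℝ => e - t • v := by continuity
    have htend : Filter.Tendsto (fun t : ℝ => e - t • v) (nhds 0) (nhds e) := by
      simpa using hcont.tendsto 0
    have hev : ∀ᶠ t : ℝ in nhds 0, e - t • v ∈ interior P :=
      htend.eventually (isOpen_interior.eventually_mem he)
    have hev' : ∀ᶠ t : ℝ in nhdsWithin 0 (Set.Ioi 0), e - t • v ∈ interior P :=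
      hev.filter_mono nhdsWithin_le_nhds
    obtain ⟨t, hmem, ht⟩ := (hev'.and eventually_mem_nhdsWithin).exists
    have htpos : (0 : ℝ) < t := ht
    refine ⟨t⁻¹, ?_⟩
    have h5 := hPsmul t⁻¹ (by positivity) _ (hPsub hmem)
    have heq : t⁻¹ • (e - t • v) = t⁻¹ • e - v := by
      rw [smul_sub, smul_smul, inv_mul_cancel₀ (ne_of_gt htpos), one_smul]
    rwa [heq] at h5
  by_cases hE : e = 0
  · -- degenerate case : the whole space is trivial
    have htriv : ∀ v : E, v = 0 := by
      intro v
      obtain ⟨r, hr⟩ := hSne v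
      obtain ⟨r', hr'⟩ := hSne (-v)
      rw [hE, smul_zero, zero_sub] at hr hr'
      have hmemv : v ∈ P ∩ (-P) := ⟨by simpa using hr', by simpa [Set.mem_neg] using hr⟩
      rw [hPpointed] at hmemv
      exact hmemv
    constructor
    · intro _ lam hlam
      have hWzero : ∀ n m : ℕ, W lam (u n) (u m) = 0 := by
        intro n m
        rw [hW lam hlam]
        have hset : {r : ℝ | r • e - w (lam • e) (u n) (u m) ∈ P} = Set.univ := by
          ext r
          simp only [Set.mem_setOf_eq, Set.mem_univ, iff_true]
          have h0 : r • e - w (lam • e) (u n) (u m) = 0 := htriv _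
          rw [h0]
          have : e = (0 : E) := hE
          rw [← this]
          exact heP
        rw [hset]
        exact Real.sInf_of_not_bddBelow not_bddBelow_univ
      have hfun : (fun p : ℕ × ℕ => W lam (u p.1) (u p.2)) = fun _ => (0 : ℝ) :=
        funext fun p => hWzero p.1 p.2
      rw [hfun]
      exact tendsto_const_nhds
    · intro _ c hc
      refine ⟨0, fun n _ m _ => ?_⟩
      have h0 : c - w c (u n) (u m) = c := by rw [htriv (w c (u n) (u m)), sub_zero]
      rw [h0]
      exact hc
  · -- main case : e ≠ 0
    have hSnonneg : ∀ v ∈ P, ∀ r : ℝ, r • e - v ∈ P → 0 ≤ r := by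
      intro v hv r hr
      by_contra hneg
      push_neg at hneg
      have h1 : r • e ∈ P := by
        have := hPadd _ hr _ hv
        simpa using this
      have h2 : (-r) • e ∈ P := hPsmul (-r) (by linarith) e heP
      have h3 : r • e ∈ P ∩ (-P) := ⟨h1, by rw [Set.mem_neg]; simpa [neg_smul] using h2⟩
      rw [hPpointed] at h3
      have h4 : r • e = 0 := h3
      rcases smul_eq_zero.mp h4 with h | h
      · exact absurd h (ne_of_lt hneg)
      · exact hE h
    constructor
    · -- Cauchy ⇒ scalarized convergence
      intro hC lam hlam
      rw [Metric.tendsto_nhds]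
      intro ε hε
      set δ : ℝ := min lam ε / 2 with hδdef
      have hδpos : 0 < δ := by
        have : 0 < min lam ε := lt_min hlam hε
        positivity
      have hδlam : δ < lam := by
        have h1 : min lam ε ≤ lam := min_le_left _ _
        have : δ ≤ lam / 2 := by rw [hδdef]; linarith
        linarith
      have hδε : δ < ε := by
        have h1 : min lam ε ≤ ε := min_le_right _ _
        have : δ ≤ ε / 2 := by rw [hδdef]; linarith
        linarith
      have hδe : δ • e ∈ interior P := hintsmul δ hδpos e he
      obtain ⟨N, hN⟩ := hC (δ • e) hδe
      rw [Filter.eventually_atTop]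
      refine ⟨(N + 1, N + 1), fun p hp => ?_⟩
      obtain ⟨n, m⟩ := p
      have hn : n > N := lt_of_lt_of_le (Nat.lt_succ_self N) hp.1
      have hm : m > N := lt_of_lt_of_le (Nat.lt_succ_self N) hp.2
      have hlamE : lam • e ∈ interior P := hintsmul lam hlam e he
      have hvP : w (lam • e) (u n) (u m) ∈ P := hwP _ hlamE _ _
      have hmono' : w (δ • e) (u n) (u m) - w (lam • e) (u n) (u m) ∈ P := by
        have h := hmono (δ • e) hδe ((lam - δ) • e)
          (hintsmul _ (by linarith) e he) (u n) (u m)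
        have heq : δ • e + (lam - δ) • e = lam • e := by module
        rwa [heq] at h
      have hcauchy := hN n hn m hm
      have hδS : δ • e - w (lam • e) (u n) (u m) ∈ P := by
        have h := hPadd _ (hPsub hcauchy) _ hmono'
        have heq : δ • e - w (δ • e) (u n) (u m) +
            (w (δ • e) (u n) (u m) - w (lam • e) (u n) (u m)) =
            δ • e - w (lam • e) (u n) (u m) := by abel
        rwa [heq] at h
      have hbdd : BddBelow {r : ℝ | r • e - w (lam • e) (u n) (u m) ∈ P} :=
        ⟨0, fun r hr => hSnonneg _ hvP r hr⟩
      have hle : W lam (u n) (u m) ≤ δ := by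
        rw [hW lam hlam]
        exact csInf_le hbdd hδS
      have hge : 0 ≤ W lam (u n) (u m) := by
        rw [hW lam hlam]
        exact le_csInf ⟨δ, hδS⟩ fun r hr => hSnonneg _ hvP r hr
      rw [Real.dist_eq, sub_zero, abs_of_nonneg hge]
      linarith
    · -- scalarized convergence ⇒ Cauchy
      intro hT c hc
      obtain ⟨δ, hδpos, hδc⟩ : ∃ δ : ℝ, 0 < δ ∧ c - δ • e ∈ interior P := by
        have hcont : Continuous fun t : ℝ => c - t • e := by continuity
        have htend : Filter.Tendsto (fun t : ℝ => c - t • e) (nhds 0) (nhds c) := by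
          simpa using hcont.tendsto 0
        have hev : ∀ᶠ t : ℝ in nhds 0, c - t • e ∈ interior P :=
          htend.eventually (isOpen_interior.eventually_mem hc)
        have hev' : ∀ᶠ t : ℝ in nhdsWithin 0 (Set.Ioi 0), c - t • e ∈ interior P :=
          hev.filter_mono nhdsWithin_le_nhds
        obtain ⟨t, hmem, ht⟩ := (hev'.and eventually_mem_nhdsWithin).exists
        exact ⟨t, ht, hmem⟩
      have hδe : δ • e ∈ interior P := hintsmul δ hδpos e he
      have htend := hT δ hδpos
      rw [Metric.tendsto_nhds] at htend
      have hev := htend δ hδpos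
      rw [Filter.eventually_atTop] at hev
      obtain ⟨a, ha⟩ := hev
      refine ⟨max a.1 a.2, fun n hn m hm => ?_⟩
      have hdist := ha (n, m)
        ⟨le_of_lt (lt_of_le_of_lt (le_max_left a.1 a.2) hn),
         le_of_lt (lt_of_le_of_lt (le_max_right a.1 a.2) hm)⟩
      rw [Real.dist_eq, sub_zero] at hdist
      have hWlt : W δ (u n) (u m) < δ := lt_of_le_of_lt (le_abs_self _) hdist
      have hvP : w (δ • e) (u n) (u m) ∈ P := hwP _ hδe _ _
      have hne : {r : ℝ | r • e - w (δ • e) (u n) (u m) ∈ P}.Nonempty := hSne _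
      rw [hW δ hδpos] at hWlt
      obtain ⟨r, hrS, hrδ⟩ := exists_lt_of_csInf_lt hne hWlt
      have hmono' : w (δ • e) (u n) (u m) - w c (u n) (u m) ∈ P := by
        have h := hmono (δ • e) hδe (c - δ • e) hδc (u n) (u m)
        have heq : δ • e + (c - δ • e) = c := by abel
        rwa [heq] at h
      have h1 : (δ - r) • e ∈ P := hPsmul _ (by linarith) e heP
      have h2 : r • e - w (δ • e) (u n) (u m) ∈ P := hrS
      have hsum : c - δ • e + ((δ - r) • e + (r • e - w (δ • e) (u n) (u m) +
          (w (δ • e) (u n) (u m) - w c (u n) (u m)))) = c - w c (u n) (u m) := by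
        rw [sub_smul]; abel
      have hfin := hintadd _ hδc _ (hPadd _ h1 _ (hPadd _ h2 _ hmono'))
      rwa [hsum] at hfin
end

section
/- Let Y be a compact Hausdorff space, E = C(Y, ℝ) with sup-norm, P = {f ∈ C(Y, ℝ) : f ≥ 0}, and let w be a convex modular cone metric on X. Let 1 ∈ C(Y, ℝ) denote the constant function one. Then W¹ defined by W¹_λ(x,y) = ξ₁(w_{λ·1}(x,y)) for λ > 0 is a convex modular metric on X taking finite values, i.e., W¹ satisfies: (i) for given x, y, W¹_λ(x,y) = 0 for all λ > 0 iff x = y; (ii) W¹_λ(x,y) = W¹_λ(y,x); (iii) W¹_{λ+μ}(x,y) ≤ (λ/(λ+μ))·W¹_λ(x,z) + (μ/(λ+μ))·W¹_μ(z,y), and W¹_λ(x,y) < ∞ for all λ > 0 and x, y ∈ X. -/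
/-- Let `Y` be a compact Hausdorff space, `E = C(Y, ℝ)` with the
sup-norm, `P` the cone of nonnegative functions, and `w` a convex modular cone
metric on `X`.  With `1` the constant function one, define
`W¹_λ(x,y) = ξ₁(w (λ • 1) x y)` where `ξ₁(v) = inf {r : ℝ | r • 1 - v ∈ P}`.
Then `W¹` is a convex modular metric on `X` taking finite values: (i)
`W¹_λ(x,y) = 0` for all `λ > 0` iff `x = y`; (ii) symmetry; (iii)
`W¹_{λ+μ}(x,y) ≤ (λ/(λ+μ))·W¹_λ(x,z) + (μ/(λ+μ))·W¹_μ(z,y)`; and `W¹_λ(x,y) < ∞`,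
formalized as nonemptiness of the defining set of real bounds. -/
theorem scalarized_convex_modular_cone_metric_is_convex_modular_metric
    {Y : Type*} [TopologicalSpace Y] [CompactSpace Y] [T2Space Y]
    (P : Set C(Y, ℝ)) (hP : P = {f : C(Y, ℝ) | ∀ t : Y, 0 ≤ f t})
    {X : Type*} [Nonempty X]
    (w : C(Y, ℝ) → X → X → C(Y, ℝ))
    (hw1 : ∀ x y : X, (∀ c ∈ interior P, w c x y = 0) ↔ x = y)
    (hw2 : ∀ c ∈ interior P, ∀ x y : X, w c x y = w c y x)
    (hw3 : ∀ c₁ ∈ interior P, ∀ c₂ ∈ interior P, ∀ x y z : X, ∀ t : Y,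
      w (c₁ + c₂) x y t ≤
        (c₁ t / (c₁ t + c₂ t)) * w c₁ x z t
          + (c₂ t / (c₁ t + c₂ t)) * w c₂ z y t)
    (W : ℝ → X → X → ℝ)
    (hW : ∀ lam : ℝ, 0 < lam → ∀ x y : X,
      W lam x y =
        sInf {r : ℝ | r • (1 : C(Y, ℝ)) - w (lam • (1 : C(Y, ℝ))) x y ∈ P}) :
    (∀ x y : X, (∀ lam : ℝ, 0 < lam → W lam x y = 0) ↔ x = y) ∧
    (∀ lam : ℝ, 0 < lam → ∀ x y : X, W lam x y = W lam y x) ∧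
    (∀ lam mu : ℝ, 0 < lam → 0 < mu → ∀ x y z : X,
      W (lam + mu) x y ≤
        (lam / (lam + mu)) * W lam x z + (mu / (lam + mu)) * W mu z y) ∧
    (∀ lam : ℝ, 0 < lam → ∀ x y : X,
      {r : ℝ | r • (1 : C(Y, ℝ)) - w (lam • (1 : C(Y, ℝ))) x y ∈ P}.Nonempty) := by
  -- membership in the defining sets, rewritten pointwise
  have key : ∀ (f : C(Y, ℝ)) (r : ℝ),
      (r • (1 : C(Y, ℝ)) - f ∈ P) ↔ ∀ t, f t ≤ r := by
    intro f r
    rw [hP]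
    constructor
    · intro h t
      have := h t
      simp only [ContinuousMap.sub_apply, ContinuousMap.smul_apply,
        ContinuousMap.one_apply, smul_eq_mul, mul_one] at this
      linarith
    · intro h t
      have := h t
      simp only [Set.mem_setOf_eq, ContinuousMap.sub_apply, ContinuousMap.smul_apply,
        ContinuousMap.one_apply, smul_eq_mul, mul_one]
      linarith
  rcases isEmpty_or_nonempty Y with hY | hY
  · -- degenerate case: `Y` is empty, everything is trivial
    have hsub : ∀ f g : C(Y, ℝ), f = g := by
      intro f g; ext t; exact isEmptyElim t
    have hPuniv : P = Set.univ := by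
      rw [hP]; ext f
      simp only [Set.mem_setOf_eq, Set.mem_univ, iff_true]
      intro t; exact isEmptyElim t
    have hSuniv : ∀ (f : C(Y, ℝ)),
        {r : ℝ | r • (1 : C(Y, ℝ)) - f ∈ P} = Set.univ := by
      intro f; ext r; simp [hPuniv]
    have hW0 : ∀ lam : ℝ, 0 < lam → ∀ x y : X, W lam x y = 0 := by
      intro lam hlam x y
      rw [hW lam hlam x y, hSuniv,
        Real.sInf_of_not_bddBelow (by simp [not_bddBelow_univ])]
    refine ⟨?_, ?_, ?_, ?_⟩
    · intro x y
      constructor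
      · intro _
        exact (hw1 x y).mp fun c _ => hsub _ _
      · intro h lam hlam; exact hW0 lam hlam x y
    · intro lam hlam x y; rw [hW0 lam hlam, hW0 lam hlam]
    · intro lam mu hlam hmu x y z
      rw [hW0 _ (by linarith), hW0 _ hlam, hW0 _ hmu]
      simp
    · intro lam hlam x y
      exact ⟨0, by simp [hPuniv]⟩
  · -- main case: `Y` is nonempty
    -- characterization of the interior of `P`
    have hint : ∀ c : C(Y, ℝ), c ∈ interior P ↔ ∀ t, 0 < c t := by
      intro c
      constructor
      · intro hc t
        obtain ⟨ε, hε, hball⟩ := Metric.isOpen_iff.mp isOpen_interior c hc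
        have hmem : c - (ε / 2) • (1 : C(Y, ℝ)) ∈ P := by
          apply interior_subset
          apply hball
          rw [Metric.mem_ball, dist_eq_norm]
          have : c - (ε / 2) • (1 : C(Y, ℝ)) - c = -((ε / 2) • (1 : C(Y, ℝ))) := by
            ring
          rw [this, norm_neg]
          calc ‖(ε / 2) • (1 : C(Y, ℝ))‖ ≤ ε / 2 := by
                apply ContinuousMap.norm_le _ (by linarith) |>.mpr
                intro t
                simp only [ContinuousMap.smul_apply, ContinuousMap.one_apply, smul_eq_mul,
                  mul_one, Real.norm_eq_abs]
                rw [abs_of_nonneg (by linarith)]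
            _ < ε := by linarith
        rw [hP] at hmem
        have := hmem t
        simp only [Set.mem_setOf_eq, ContinuousMap.sub_apply, ContinuousMap.smul_apply,
          ContinuousMap.one_apply, smul_eq_mul, mul_one] at this
        linarith
      · intro hc
        obtain ⟨t₀, -, hmin⟩ :=
          isCompact_univ.exists_isMinOn Set.univ_nonempty c.continuous.continuousOn
        have hmin' : ∀ t, c t₀ ≤ c t := fun t => hmin (Set.mem_univ t)
        apply mem_interior.mpr
        refine ⟨Metric.ball c (c t₀), ?_, Metric.isOpen_ball, Metric.mem_ball_self (hc t₀)⟩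
        intro f hf
        rw [hP]
        intro t
        have h1 : dist (f t) (c t) ≤ dist f c := ContinuousMap.dist_apply_le_dist t
        rw [Metric.mem_ball] at hf
        have h2 : |f t - c t| < c t₀ := by
          rw [← Real.dist_eq]; exact lt_of_le_of_lt h1 hf
        have := abs_lt.mp h2
        have := hmin' t
        linarith
    have hone : ∀ lam : ℝ, 0 < lam → (lam • (1 : C(Y, ℝ))) ∈ interior P := by
      intro lam hlam
      rw [hint]
      intro t
      simpa using hlam
    -- nonnegativity of `w c x y` for `c` in the interior
    have hnonneg : ∀ c ∈ interior P, ∀ x y : X, ∀ t : Y, 0 ≤ w c x y t := by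
      intro c hc x y t
      have hcc : c + c ∈ interior P := by
        rw [hint] at hc ⊢
        intro t; have := hc t; simp only [ContinuousMap.add_apply]; linarith
      have h0 : w (c + c) x x = 0 := ((hw1 x x).mpr rfl) (c + c) hcc
      have h3 := hw3 c hc c hc x x y t
      rw [h0] at h3
      have hct : 0 < c t := (hint c).mp hc t
      have hsym : w c y x = w c x y := hw2 c hc y x
      rw [hsym] at h3
      simp only [ContinuousMap.zero_apply] at h3
      have hcoef : c t / (c t + c t) = 1 / 2 := by
        field_simp; ring
      rw [hcoef] at h3
      linarith
    -- the defining sets are nonempty and bounded below, and contain their inf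
    have hSne : ∀ f : C(Y, ℝ), {r : ℝ | r • (1 : C(Y, ℝ)) - f ∈ P}.Nonempty := by
      intro f
      exact ⟨‖f‖, (key f ‖f‖).mpr fun t =>
        le_trans (le_abs_self _) (f.norm_coe_le_norm t)⟩
    have hSbdd : ∀ f : C(Y, ℝ), BddBelow {r : ℝ | r • (1 : C(Y, ℝ)) - f ∈ P} := by
      intro f
      obtain ⟨t⟩ := hY
      exact ⟨f t, fun r hr => (key f r).mp hr t⟩
    have hle : ∀ f : C(Y, ℝ), ∀ t : Y,
        f t ≤ sInf {r : ℝ | r • (1 : C(Y, ℝ)) - f ∈ P} := by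
      intro f t
      exact le_csInf (hSne f) fun r hr => (key f r).mp hr t
    refine ⟨?_, ?_, ?_, fun lam _ x y => hSne _⟩
    · -- (i)
      intro x y
      constructor
      · intro h
        apply (hw1 x y).mp
        intro c hc
        obtain ⟨t₀, -, hmin⟩ :=
          isCompact_univ.exists_isMinOn Set.univ_nonempty c.continuous.continuousOn
        have hmin' : ∀ t, c t₀ ≤ c t := fun t => hmin (Set.mem_univ t)
        have hct₀ : 0 < c t₀ := (hint c).mp hc t₀
        set lam := c t₀ / 2 with hlamdef
        have hlam : 0 < lam := by positivity
        set d : C(Y, ℝ) := c - lam • (1 : C(Y, ℝ)) with hd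
        have hdint : d ∈ interior P := by
          rw [hint]
          intro t
          have := hmin' t
          simp only [hd, ContinuousMap.sub_apply, ContinuousMap.smul_apply,
            ContinuousMap.one_apply, smul_eq_mul, mul_one]
          simp only [hlamdef]
          linarith
        have hwlam : ∀ t, w (lam • (1 : C(Y, ℝ))) x y t ≤ 0 := by
          intro t
          have := hle (w (lam • (1 : C(Y, ℝ))) x y) t
          rw [← hW lam hlam x y, h lam hlam] at this
          exact this
        ext t
        have hdc : d + lam • (1 : C(Y, ℝ)) = c := by
          simp [hd]
        have h3 := hw3 d hdint (lam • (1 : C(Y, ℝ))) (hone lam hlam) x y x t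
        rw [hdc] at h3
        have h0 : w d x x = 0 := ((hw1 x x).mpr rfl) d hdint
        rw [h0] at h3
        simp only [ContinuousMap.zero_apply, mul_zero, zero_add] at h3
        have hct : 0 < c t := (hint c).mp hc t
        have hdt : d t + (lam • (1 : C(Y, ℝ))) t = c t := by
          rw [← hdc]; rfl
        rw [hdt] at h3
        have hcoefpos : 0 < (lam • (1 : C(Y, ℝ))) t / c t := by
          have : (lam • (1 : C(Y, ℝ))) t = lam := by
            simp
          rw [this]; positivity
        have hterm : (lam • (1 : C(Y, ℝ))) t / c t * w (lam • (1 : C(Y, ℝ))) x y t ≤ 0 :=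
          mul_nonpos_of_nonneg_of_nonpos (le_of_lt hcoefpos) (hwlam t)
        have hge : 0 ≤ w c x y t := hnonneg c hc x y t
        simp only [ContinuousMap.zero_apply]
        linarith
      · intro hxy lam hlam
        subst hxy
        have h0 : w (lam • (1 : C(Y, ℝ))) x x = 0 := ((hw1 x x).mpr rfl) _ (hone lam hlam)
        rw [hW lam hlam x x, h0]
        have : {r : ℝ | r • (1 : C(Y, ℝ)) - (0 : C(Y, ℝ)) ∈ P} = Set.Ici 0 := by
          ext r
          rw [Set.mem_setOf_eq, key]
          obtain ⟨t⟩ := hY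
          constructor
          · intro h; exact h t
          · intro h t'; exact h
        rw [this, csInf_Ici]
    · -- (ii)
      intro lam hlam x y
      rw [hW lam hlam x y, hW lam hlam y x, hw2 _ (hone lam hlam) x y]
    · -- (iii)
      intro lam mu hlam hmu x y z
      have hlm : 0 < lam + mu := by linarith
      rw [hW _ hlm x y, hW _ hlam x z, hW _ hmu z y]
      apply csInf_le (hSbdd _)
      rw [Set.mem_setOf_eq, key]
      intro t
      have h3 := hw3 (lam • (1 : C(Y, ℝ))) (hone lam hlam)
        (mu • (1 : C(Y, ℝ))) (hone mu hmu) x y z t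
      have hsum : lam • (1 : C(Y, ℝ)) + mu • (1 : C(Y, ℝ)) = (lam + mu) • (1 : C(Y, ℝ)) := by
        rw [add_smul]
      rw [hsum] at h3
      have happ1 : (lam • (1 : C(Y, ℝ))) t = lam := by simp
      have happ2 : (mu • (1 : C(Y, ℝ))) t = mu := by simp
      rw [happ1, happ2] at h3
      have hgz : w (lam • (1 : C(Y, ℝ))) x z t ≤
          sInf {r : ℝ | r • (1 : C(Y, ℝ)) - w (lam • (1 : C(Y, ℝ))) x z ∈ P} := hle _ t
      have hzy : w (mu • (1 : C(Y, ℝ))) z y t ≤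
          sInf {r : ℝ | r • (1 : C(Y, ℝ)) - w (mu • (1 : C(Y, ℝ))) z y ∈ P} := hle _ t
      have hc1 : 0 ≤ lam / (lam + mu) := by positivity
      have hc2 : 0 ≤ mu / (lam + mu) := by positivity
      calc w ((lam + mu) • (1 : C(Y, ℝ))) x y t
          ≤ lam / (lam + mu) * w (lam • (1 : C(Y, ℝ))) x z t
            + mu / (lam + mu) * w (mu • (1 : C(Y, ℝ))) z y t := h3
        _ ≤ lam / (lam + mu) * sInf {r : ℝ | r • (1 : C(Y, ℝ)) - w (lam • (1 : C(Y, ℝ))) x z ∈ P}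
            + mu / (lam + mu) * sInf {r : ℝ | r • (1 : C(Y, ℝ)) - w (mu • (1 : C(Y, ℝ))) z y ∈ P} := by
            apply add_le_add
            · exact mul_le_mul_of_nonneg_left hgz hc1
            · exact mul_le_mul_of_nonneg_left hzy hc2
end

section
/- Let Y be a compact Hausdorff space, E = C(Y, ℝ) with sup-norm, P = {f ∈ C(Y, ℝ) : f ≥ 0}, and let (X, w) be a complete convex modular cone metric space. Suppose there exist a constant k ∈ (0,1) and c₀ ∈ int P such that a mapping T : X → X satisfies w_{kc}(Tx, Ty) ⪯ w_c(x, y) for all c with 0 ≪ c ≪ c₀ and all x, y ∈ X. Then T has a unique fixed point in X. -/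
lemma intP_char' {Y : Type*} [TopologicalSpace Y] [CompactSpace Y] [Nonempty Y]
    (c : C(Y, ℝ)) :
    c ∈ interior {f : C(Y, ℝ) | ∀ t : Y, 0 ≤ f t} ↔ ∀ t, 0 < c t := by
  constructor
  · intro hc
    obtain ⟨ε, hε, hball⟩ := Metric.mem_nhds_iff.mp (mem_interior_iff_mem_nhds.mp hc)
    intro t
    have hg : c - ContinuousMap.const Y (ε/2) ∈ Metric.ball c ε := by
      rw [Metric.mem_ball]
      have : dist (c - ContinuousMap.const Y (ε/2)) c ≤ ε/2 := by
        rw [ContinuousMap.dist_le (by positivity)]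
        intro x
        simp [Real.dist_eq, abs_of_pos hε]
      linarith
    have := hball hg t
    simp only [ContinuousMap.sub_apply, ContinuousMap.const_apply] at this
    linarith
  · intro hc
    obtain ⟨t₀, -, hmin⟩ := isCompact_univ.exists_isMinOn Set.univ_nonempty
      c.continuous.continuousOn
    apply mem_interior_iff_mem_nhds.mpr
    apply Filter.mem_of_superset (Metric.ball_mem_nhds c (hc t₀))
    intro g hg t
    have h1 : dist (g t) (c t) ≤ dist g c := ContinuousMap.dist_apply_le_dist t
    have h2 : dist g c < c t₀ := Metric.mem_ball.mp hg
    have h3 : c t₀ ≤ c t := hmin (Set.mem_univ t)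
    rw [Real.dist_eq] at h1
    have h4 : |g t - c t| < c t₀ := lt_of_le_of_lt h1 h2
    have h5 := abs_le.mp h4.le
    show (0:ℝ) ≤ g t
    linarith [h5.1]



/-- Let `Y` be a compact Hausdorff space, `E = C(Y, ℝ)` with the
sup-norm, `P` the cone of nonnegative functions, and `(X, w)` a complete convex
modular cone metric space.  If there exist `k ∈ (0,1)` and `c₀ ∈ interior P` such
that `T : X → X` satisfies `w (k • c) (T x) (T y) ⪯ w c x y` for all `c` with
`0 ≪ c ≪ c₀` and all `x, y`, then `T` has a unique fixed point. -/
theorem convex_modular_cone_metric_contraction_fixed_point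
    {Y : Type*} [TopologicalSpace Y] [CompactSpace Y] [T2Space Y]
    (P : Set C(Y, ℝ)) (hP : P = {f : C(Y, ℝ) | ∀ t : Y, 0 ≤ f t})
    {X : Type*} [Nonempty X]
    (w : C(Y, ℝ) → X → X → C(Y, ℝ))
    (hw1 : ∀ x y : X, (∀ c ∈ interior P, w c x y = 0) ↔ x = y)
    (hw2 : ∀ c ∈ interior P, ∀ x y : X, w c x y = w c y x)
    (hw3 : ∀ c₁ ∈ interior P, ∀ c₂ ∈ interior P, ∀ x y z : X, ∀ t : Y,
      w (c₁ + c₂) x y t ≤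
        (c₁ t / (c₁ t + c₂ t)) * w c₁ x z t
          + (c₂ t / (c₁ t + c₂ t)) * w c₂ z y t)
    -- completeness: every modular cone Cauchy sequence is modular cone convergent
    (hcomplete : ∀ u : ℕ → X,
      (∀ c ∈ interior P, ∃ N : ℕ, ∀ n > N, ∀ m > N,
        c - w c (u n) (u m) ∈ interior P) →
      ∃ x : X, ∀ c ∈ interior P, ∃ N : ℕ, ∀ n > N,
        c - w c (u n) x ∈ interior P)
    (T : X → X) (k : ℝ) (hk0 : 0 < k) (hk1 : k < 1)
    (c₀ : C(Y, ℝ)) (hc₀ : c₀ ∈ interior P)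
    (hT : ∀ c : C(Y, ℝ), c ∈ interior P → c₀ - c ∈ interior P →
      ∀ x y : X, w c x y - w (k • c) (T x) (T y) ∈ P) :
    ∃! z : X, T z = z := by
  classical
  subst hP
  rcases isEmpty_or_nonempty Y with hY | hY
  · have hXsub : ∀ a b : X, a = b := fun a b =>
      (hw1 a b).mp (fun c _ => ContinuousMap.ext fun t => isEmptyElim t)
    obtain ⟨x⟩ := (inferInstance : Nonempty X)
    exact ⟨x, hXsub (T x) x, fun y _ => hXsub y x⟩
  have hint : ∀ c : C(Y,ℝ), c ∈ interior {f : C(Y,ℝ) | ∀ t : Y, 0 ≤ f t} ↔ ∀ t, 0 < c t :=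
    intP_char'
  have hc₀p : ∀ t, 0 < c₀ t := (hint c₀).mp hc₀
  have hsm : ∀ (μ : ℝ) (c : C(Y,ℝ)) (t : Y), (μ • c) t = μ * c t := fun μ c t => rfl
  have hposs : ∀ (μ : ℝ), 0 < μ → ∀ c : C(Y,ℝ), (∀ t, 0 < c t) → ∀ t, 0 < (μ • c) t :=
    fun μ hμ c hc t => by rw [hsm]; exact mul_pos hμ (hc t)
  -- pointwise contraction
  have hT' : ∀ c : C(Y,ℝ), (∀ t, 0 < c t) → (∀ t, c t < c₀ t) →
      ∀ x y (t : Y), w (k • c) (T x) (T y) t ≤ w c x y t := by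
    intro c h1 h2 x y t
    have hmem := hT c ((hint c).mpr h1)
      ((hint _).mpr (fun s => by
        rw [ContinuousMap.sub_apply]; linarith [h2 s])) x y
    have := hmem t
    rw [ContinuousMap.sub_apply] at this
    linarith
  -- reflexivity
  have hrefl : ∀ c : C(Y,ℝ), (∀ t, 0 < c t) → ∀ x : X, w c x x = 0 :=
    fun c hc x => (hw1 x x).mpr rfl c ((hint c).mpr hc)
  -- nonnegativity
  have hnn : ∀ c : C(Y,ℝ), (∀ t, 0 < c t) → ∀ x y (t : Y), 0 ≤ w c x y t := by
    intro c hc x y t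
    have hcc : ∀ s, 0 < (c + c) s := fun s => by
      rw [ContinuousMap.add_apply]; linarith [hc s]
    have h3 := hw3 c ((hint c).mpr hc) c ((hint c).mpr hc) x x y t
    rw [hrefl (c+c) hcc x] at h3
    rw [hw2 c ((hint c).mpr hc) y x] at h3
    have hct := hc t
    have hco : c t / (c t + c t) = 1/2 := by rw [div_eq_iff (by linarith)]; ring
    rw [hco] at h3
    simp only [ContinuousMap.zero_apply] at h3
    linarith
  -- scaled triangle inequality
  have htri : ∀ (μ : ℝ), 0 < μ → μ < 1 → ∀ c : C(Y,ℝ), (∀ t, 0 < c t) → ∀ x y z (t : Y),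
      w c x y t ≤ μ * w (μ • c) x z t + (1-μ) * w ((1-μ) • c) z y t := by
    intro μ h0 h1 c hc x y z t
    have hc1 : ∀ s, 0 < (μ • c) s := hposs μ h0 c hc
    have hc2 : ∀ s, 0 < ((1-μ) • c) s := hposs (1-μ) (by linarith) c hc
    have h3 := hw3 (μ • c) ((hint _).mpr hc1) ((1-μ) • c) ((hint _).mpr hc2) x y z t
    have hsum : μ • c + (1-μ) • c = c := by rw [← add_smul]; norm_num
    rw [hsum] at h3
    have hct := hc t
    have e1 : (μ • c) t / ((μ • c) t + ((1-μ) • c) t) = μ := by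
      rw [hsm, hsm, show μ * c t + (1-μ) * c t = c t by ring]
      field_simp
    have e2 : ((1-μ) • c) t / ((μ • c) t + ((1-μ) • c) t) = 1-μ := by
      rw [hsm, hsm, show μ * c t + (1-μ) * c t = c t by ring]
      field_simp
    rw [e1, e2] at h3
    exact h3
  -- scaling inequality
  have hscale : ∀ (μ : ℝ), 0 < μ → μ < 1 → ∀ c : C(Y,ℝ), (∀ t, 0 < c t) → ∀ x y (t : Y),
      w c x y t ≤ μ * w (μ • c) x y t := by
    intro μ h0 h1 c hc x y t
    have h3 := htri μ h0 h1 c hc x y y t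
    rw [hrefl ((1-μ) • c) (hposs (1-μ) (by linarith) c hc) y] at h3
    simp only [ContinuousMap.zero_apply, mul_zero, add_zero] at h3
    exact h3
  have hscalen : ∀ (n : ℕ) (c : C(Y,ℝ)), (∀ t, 0 < c t) → ∀ x y (t : Y),
      w c x y t ≤ k^n * w ((k^n) • c) x y t := by
    intro n
    induction n with
    | zero => intro c hc x y t; simp
    | succ n ih =>
      intro c hc x y t
      have h1 := hscale k hk0 hk1 c hc x y t
      have h2 := ih (k • c) (hposs k hk0 c hc) x y t
      rw [smul_smul, ← pow_succ] at h2
      calc w c x y t ≤ k * w (k • c) x y t := h1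
        _ ≤ k * (k^n * w ((k^(n+1)) • c) x y t) := mul_le_mul_of_nonneg_left h2 hk0.le
        _ = k^(n+1) * w ((k^(n+1)) • c) x y t := by ring
  -- iterated contraction
  have hiter : ∀ c : C(Y,ℝ), (∀ t, 0 < c t) → (∀ t, c t < c₀ t) → ∀ (n : ℕ) x y (t : Y),
      w ((k^n) • c) (T^[n] x) (T^[n] y) t ≤ w c x y t := by
    intro c h1 h2 n
    induction n with
    | zero => intro x y t; simp
    | succ n ih =>
      intro x y t
      have hp : ∀ s, 0 < ((k^n) • c) s := hposs _ (pow_pos hk0 n) c h1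
      have hkn : k^n ≤ 1 := pow_le_one₀ hk0.le hk1.le
      have hlt : ∀ s, ((k^n) • c) s < c₀ s := by
        intro s; rw [hsm]
        nlinarith [h1 s, h2 s, pow_pos hk0 n]
      have h3 := hT' ((k^n) • c) hp hlt (T^[n] x) (T^[n] y) t
      rw [smul_smul, ← pow_succ'] at h3
      rw [Function.iterate_succ_apply', Function.iterate_succ_apply']
      exact le_trans h3 (ih x y t)
  -- chain bound
  have hchain : ∀ c : C(Y,ℝ), (∀ t, 0 < c t) → (∀ t, c t < c₀ t) → ∀ (x₀ : X) (j : ℕ) (t : Y),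
      w c x₀ (T^[j+1] x₀) t ≤ w ((1-k) • c) x₀ (T x₀) t := by
    intro c h1 h2 x₀ j
    induction j with
    | zero =>
      intro t
      have hs := hscale (1-k) (by linarith) (by linarith) c h1 x₀ (T x₀) t
      rw [Function.iterate_one]
      have hnn' := hnn ((1-k) • c) (hposs _ (by linarith) c h1) x₀ (T x₀) t
      nlinarith
    | succ j ih =>
      intro t
      have ht5 := htri (1-k) (by linarith) (by linarith) c h1 x₀ (T^[j+1+1] x₀) (T x₀) t
      rw [show (1-(1-k) : ℝ) = k by ring] at ht5
      have h4 : w (k • c) (T x₀) (T^[j+1+1] x₀) t ≤ w c x₀ (T^[j+1] x₀) t := by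
        have h6 := hT' c h1 h2 x₀ (T^[j+1] x₀) t
        rw [show T^[j+1+1] x₀ = T (T^[j+1] x₀) from Function.iterate_succ_apply' T (j+1) x₀]
        exact h6
      have h5 := ih t
      have := mul_le_mul_of_nonneg_left (h4.trans h5) hk0.le
      linarith
  -- key geometric bound
  have hkey : ∀ c : C(Y,ℝ), (∀ t, 0 < c t) → (∀ t, c t < c₀ t) → ∀ (x₀ : X) (n m : ℕ),
      n < m → ∀ t : Y, w c (T^[n] x₀) (T^[m] x₀) t ≤ k^n * w ((1-k) • c) x₀ (T x₀) t := by
    intro c h1 h2 x₀ n m hnm t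
    have h3 := hscalen n c h1 (T^[n] x₀) (T^[m] x₀) t
    have h4 : w ((k^n) • c) (T^[n] x₀) (T^[m] x₀) t ≤ w c x₀ (T^[m-n] x₀) t := by
      have h6 := hiter c h1 h2 n x₀ (T^[m-n] x₀) t
      rwa [← Function.iterate_add_apply, Nat.add_sub_cancel' hnm.le] at h6
    have h5 : w c x₀ (T^[m-n] x₀) t ≤ w ((1-k) • c) x₀ (T x₀) t := by
      obtain ⟨j, hj⟩ : ∃ j, m - n = j + 1 := ⟨m - n - 1, by omega⟩
      rw [hj]; exact hchain c h1 h2 x₀ j t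
    calc w c (T^[n] x₀) (T^[m] x₀) t ≤ k^n * w ((k^n) • c) (T^[n] x₀) (T^[m] x₀) t := h3
      _ ≤ k^n * w ((1-k) • c) x₀ (T x₀) t :=
        mul_le_mul_of_nonneg_left (h4.trans h5) (pow_pos hk0 n).le
  -- min / max of continuous functions
  have hmin : ∀ f : C(Y,ℝ), ∃ t₀, ∀ t, f t₀ ≤ f t := by
    intro f
    obtain ⟨t₀, -, hm⟩ := isCompact_univ.exists_isMinOn Set.univ_nonempty
      f.continuous.continuousOn
    exact ⟨t₀, fun t => hm (Set.mem_univ t)⟩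
  have hmax : ∀ f : C(Y,ℝ), ∃ t₀, ∀ t, f t ≤ f t₀ := by
    intro f
    obtain ⟨t₀, -, hm⟩ := isCompact_univ.exists_isMaxOn Set.univ_nonempty
      f.continuous.continuousOn
    exact ⟨t₀, fun t => hm (Set.mem_univ t)⟩
  -- choice of scaling factor
  have hmu : ∀ c : C(Y,ℝ), (∀ t, 0 < c t) → ∃ μ : ℝ, 0 < μ ∧ μ < 1 ∧ ∀ t, μ * c t < c₀ t := by
    intro c hc
    obtain ⟨ta, hta⟩ := hmin c₀
    obtain ⟨tb, htb⟩ := hmax c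
    have hA : 0 < c₀ ta := hc₀p ta
    have hB : 0 < c tb := hc tb
    refine ⟨c₀ ta / (c₀ ta + c tb), by positivity, ?_, ?_⟩
    · rw [div_lt_one (by linarith)]; linarith
    · intro t
      have h2 : c t ≤ c tb := htb t
      have h3 : c₀ ta ≤ c₀ t := hta t
      have h4 : c₀ ta / (c₀ ta + c tb) * c t < c₀ ta := by
        rw [div_mul_eq_mul_div, div_lt_iff₀ (by linarith)]
        have := hc t
        nlinarith
      linarith
  obtain ⟨x₀⟩ := (inferInstance : Nonempty X)
  -- the orbit is Cauchy
  have hcau : ∀ c ∈ interior {f : C(Y,ℝ) | ∀ t : Y, 0 ≤ f t}, ∃ N : ℕ, ∀ n > N, ∀ m > N,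
      c - w c (T^[n] x₀) (T^[m] x₀) ∈ interior {f : C(Y,ℝ) | ∀ t : Y, 0 ≤ f t} := by
    intro c hcI
    have hc := (hint c).mp hcI
    obtain ⟨μ, hμ0, hμ1, hμc⟩ := hmu c hc
    have hμcp : ∀ s, 0 < (μ • c) s := hposs μ hμ0 c hc
    have hμclt : ∀ s, (μ • c) s < c₀ s := fun s => by rw [hsm]; exact hμc s
    set B := w ((1-k) • (μ • c)) x₀ (T x₀) with hBdef
    obtain ⟨tb, htb⟩ := hmax B
    have hBnn : ∀ s, 0 ≤ B s := hnn _ (hposs _ (by linarith) _ hμcp) x₀ (T x₀)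
    obtain ⟨ta, hta⟩ := hmin c
    obtain ⟨N, hN⟩ := exists_pow_lt_of_lt_one
      (show (0:ℝ) < c ta / (B tb + 1) from div_pos (hc ta) (by linarith [hBnn tb])) hk1
    refine ⟨N, ?_⟩
    intro n hn m hm
    apply (hint _).mpr
    intro t
    rw [ContinuousMap.sub_apply]
    have key : ∀ p q : ℕ, N < p → p < q → w c (T^[p] x₀) (T^[q] x₀) t < c t := by
      intro p q hp hpq
      have h3 := hscale μ hμ0 hμ1 c hc (T^[p] x₀) (T^[q] x₀) t
      have h4 := hkey (μ • c) hμcp hμclt x₀ p q hpq t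
      have hkp : k^p ≤ k^N := pow_le_pow_of_le_one hk0.le hk1.le hp.le
      have h7 : k^p * B t ≤ k^N * (B tb + 1) :=
        mul_le_mul hkp (by linarith [htb t]) (hBnn t) (pow_pos hk0 N).le
      have h8 : k^N * (B tb + 1) < c ta :=
        (lt_div_iff₀ (show (0:ℝ) < B tb + 1 by linarith [hBnn tb])).mp hN
      have h9 : μ * w (μ • c) (T^[p] x₀) (T^[q] x₀) t ≤ μ * (k^p * B t) :=
        mul_le_mul_of_nonneg_left h4 hμ0.le
      have h10 : μ * (k^p * B t) ≤ k^p * B t :=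
        mul_le_of_le_one_left (mul_nonneg (pow_pos hk0 p).le (hBnn t)) hμ1.le
      have h11 : c ta ≤ c t := hta t
      linarith
    rcases lt_trichotomy n m with h | h | h
    · linarith [key n m hn h]
    · subst h
      rw [hrefl c hc (T^[n] x₀)]
      simpa using hc t
    · have h12 := key m n hm h
      rw [hw2 c hcI (T^[n] x₀) (T^[m] x₀)]
      linarith
  obtain ⟨xs, hxs⟩ := hcomplete (fun n => T^[n] x₀) hcau
  have hconv : ∀ c : C(Y,ℝ), (∀ t, 0 < c t) → ∃ N : ℕ, ∀ n > N, ∀ t : Y,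
      w c (T^[n] x₀) xs t < c t := by
    intro c hc
    obtain ⟨N, hN⟩ := hxs c ((hint c).mpr hc)
    refine ⟨N, fun n hn t => ?_⟩
    have := ((hint _).mp (hN n hn)) t
    rw [ContinuousMap.sub_apply] at this
    linarith
  -- Claim A : estimate on w c xs (T xs)
  have hA : ∀ c : C(Y,ℝ), (∀ t, 0 < c t) → (∀ t, (1/(2*k)) * c t < c₀ t) → ∀ t : Y,
      w c xs (T xs) t ≤ (1/4) * c t + (1/(4*k)) * c t := by
    intro c hc hcsmall t
    have hd : ∀ s, 0 < ((1/(2*k)) • c) s := hposs _ (by positivity) c hc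
    have hdlt : ∀ s, ((1/(2*k)) • c) s < c₀ s := fun s => by rw [hsm]; exact hcsmall s
    have hhalf : ∀ s, 0 < ((1/2 : ℝ) • c) s := hposs _ (by norm_num) c hc
    obtain ⟨N₁, hN₁⟩ := hconv ((1/2 : ℝ) • c) hhalf
    obtain ⟨N₂, hN₂⟩ := hconv ((1/(2*k)) • c) hd
    set n := max N₁ N₂ + 1 with hndef
    have hn1 : n + 1 > N₁ := by omega
    have hn2 : n > N₂ := by omega
    have ht5 := htri (1/2) (by norm_num) (by norm_num) c hc xs (T xs) (T^[n+1] x₀) t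
    rw [show (1-(1/2) : ℝ) = 1/2 by norm_num] at ht5
    have hterm1 : w ((1/2 : ℝ) • c) xs (T^[n+1] x₀) t < (1/2) * c t := by
      rw [hw2 _ ((hint _).mpr hhalf)]
      have := hN₁ (n+1) hn1 t
      rw [hsm] at this
      exact this
    have hterm2 : w ((1/2 : ℝ) • c) (T^[n+1] x₀) (T xs) t ≤
        w ((1/(2*k)) • c) (T^[n] x₀) xs t := by
      have hTT := hT' ((1/(2*k)) • c) hd hdlt (T^[n] x₀) xs t
      rw [smul_smul, show k * (1/(2*k)) = (1/2 : ℝ) by field_simp] at hTT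
      rw [Function.iterate_succ_apply']
      exact hTT
    have hterm2' : w ((1/(2*k)) • c) (T^[n] x₀) xs t < (1/(2*k)) * c t := by
      have := hN₂ n hn2 t
      rw [hsm] at this
      exact this
    have hrw : (1/(4*k)) * c t = (1/2) * ((1/(2*k)) * c t) := by ring
    linarith
  -- fixed point
  have hfix : T xs = xs := by
    have hmain : ∀ c ∈ interior {f : C(Y,ℝ) | ∀ t : Y, 0 ≤ f t}, w c xs (T xs) = 0 := by
      intro c hcI
      have hc := (hint c).mp hcI
      ext t
      rw [ContinuousMap.zero_apply]
      have h0 := hnn c hc xs (T xs) t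
      by_contra hne
      have hpos : 0 < w c xs (T xs) t := lt_of_le_of_ne h0 (Ne.symm hne)
      obtain ⟨ta, hta⟩ := hmin c₀
      obtain ⟨tb, htb⟩ := hmax c
      have hA0 : 0 < c₀ ta := hc₀p ta
      have hB0 : 0 < c tb := hc tb
      have hKpos : (0:ℝ) < 1/4 + 1/(4*k) := by positivity
      set ε := w c xs (T xs) t with hεdef
      set μ := min (min (1/2) (k * c₀ ta / c tb)) (ε / ((1/4 + 1/(4*k)) * c t + 1)) with hμdef
      have hμ0 : 0 < μ := by
        apply lt_min (lt_min (by norm_num) (by positivity))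
        have := hc t
        positivity
      have hμhalf : μ ≤ 1/2 := le_trans (min_le_left _ _) (min_le_left _ _)
      have hμ1 : μ < 1 := by linarith
      have hsmall : ∀ s, (1/(2*k)) * ((μ • c) s) < c₀ s := by
        intro s
        rw [hsm]
        have h1 : μ ≤ k * c₀ ta / c tb := le_trans (min_le_left _ _) (min_le_right _ _)
        have h2 : c s ≤ c tb := htb s
        have h3 : c₀ ta ≤ c₀ s := hta s
        have h5 : μ * c s ≤ (k * c₀ ta / c tb) * c tb :=
          mul_le_mul h1 h2 (hc s).le (by positivity)
        have h6 : (k * c₀ ta / c tb) * c tb = k * c₀ ta := by field_simp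
        rw [h6] at h5
        have h7 : (1/(2*k)) * (μ * c s) ≤ (1/(2*k)) * (k * c₀ ta) :=
          mul_le_mul_of_nonneg_left h5 (by positivity)
        have h8 : (1/(2*k)) * (k * c₀ ta) = c₀ ta / 2 := by field_simp
        rw [h8] at h7
        linarith
      have hAA := hA (μ • c) (hposs μ hμ0 c hc) hsmall t
      rw [hsm] at hAA
      have hAA' : w (μ • c) xs (T xs) t ≤ (1/4 + 1/(4*k)) * (μ * c t) := by linarith
      have hsc := hscale μ hμ0 hμ1 c hc xs (T xs) t
      have e1 : ε ≤ μ * ((1/4 + 1/(4*k)) * (μ * c t)) :=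
        hsc.trans (mul_le_mul_of_nonneg_left hAA' hμ0.le)
      have e2 : μ * ((1/4 + 1/(4*k)) * (μ * c t)) ≤ μ * ((1/4 + 1/(4*k)) * c t) := by
        have hct := hc t
        have : μ * c t ≤ c t := by nlinarith
        nlinarith
      have hμε : μ ≤ ε / ((1/4 + 1/(4*k)) * c t + 1) := min_le_right _ _
      have hden : (0:ℝ) < (1/4 + 1/(4*k)) * c t + 1 := by
        have := hc t; positivity
      have e3 : μ * ((1/4 + 1/(4*k)) * c t) ≤
          (ε / ((1/4 + 1/(4*k)) * c t + 1)) * ((1/4 + 1/(4*k)) * c t) := by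
        apply mul_le_mul_of_nonneg_right hμε
        have := hc t; positivity
      have e4 : (ε / ((1/4 + 1/(4*k)) * c t + 1)) * ((1/4 + 1/(4*k)) * c t) < ε := by
        rw [div_mul_eq_mul_div, div_lt_iff₀ hden]
        nlinarith
      linarith
    have := (hw1 xs (T xs)).mp hmain
    exact this.symm
  -- uniqueness
  have huniq : ∀ z₁ z₂ : X, T z₁ = z₁ → T z₂ = z₂ → z₁ = z₂ := by
    intro z₁ z₂ h₁ h₂
    have hmain : ∀ c : C(Y,ℝ), (∀ t, 0 < c t) → (∀ t, c t < c₀ t) →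
        ∀ t : Y, w c z₁ z₂ t = 0 := by
      intro c hc hlt t
      have hs := hscale k hk0 hk1 c hc z₁ z₂ t
      have hTT := hT' c hc hlt z₁ z₂ t
      rw [h₁, h₂] at hTT
      have h0 := hnn c hc z₁ z₂ t
      have := mul_le_mul_of_nonneg_left hTT hk0.le
      exact le_antisymm (by nlinarith) h0
    apply (hw1 z₁ z₂).mp
    intro c hcI
    have hc := (hint c).mp hcI
    ext t
    rw [ContinuousMap.zero_apply]
    obtain ⟨μ, hμ0, hμ1, hμc⟩ := hmu c hc
    have h1 := hscale μ hμ0 hμ1 c hc z₁ z₂ t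
    have h2 := hmain (μ • c) (hposs μ hμ0 c hc) (fun s => by rw [hsm]; exact hμc s) t
    rw [h2, mul_zero] at h1
    exact le_antisymm h1 (hnn c hc z₁ z₂ t)
  exact ⟨xs, hfix, fun y hy => huniq y xs hy hfix⟩
end

section
/- Let X = {(a,0) ∈ ℝ² : 1/2 ≤ a ≤ 1} ∪ {(0,b) ∈ ℝ² : 1/2 ≤ b ≤ 1} with the modular metric w given by w_λ((a₁,0),(a₂,0)) = 4|a₁−a₂|/(3λ), w_λ((0,b₁),(0,b₂)) = |b₁−b₂|/λ, and w_λ((a,0),(0,b)) = w_λ((0,b),(a,0)) = 4a/(3λ) + b/λ. Then every modular Cauchy sequence {xₙ} in X eventually lies in one of the two segments: either there exists N such that xₙ ∈ {(a,0) : 1/2 ≤ a ≤ 1} for all n > N, or there exists N such that xₙ ∈ {(0,b) : 1/2 ≤ b ≤ 1} for all n > N; consequently X is a complete modular metric space (every modular Cauchy sequence is modular convergent). -/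
/-- The set `X = {(a,0) : 1/2 ≤ a ≤ 1} ∪ {(0,b) : 1/2 ≤ b ≤ 1} ⊆ ℝ²`. -/
def exampleSet : Set (ℝ × ℝ) :=
  {p | (p.2 = 0 ∧ 1 / 2 ≤ p.1 ∧ p.1 ≤ 1) ∨ (p.1 = 0 ∧ 1 / 2 ≤ p.2 ∧ p.2 ≤ 1)}

/-- The modular `w` of the counterexample: `w_λ((a₁,0),(a₂,0)) = 4|a₁−a₂|/(3λ)`,
`w_λ((0,b₁),(0,b₂)) = |b₁−b₂|/λ`, `w_λ((a,0),(0,b)) = w_λ((0,b),(a,0)) = 4a/(3λ) + b/λ`. -/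
noncomputable def exampleModular (lam : ℝ) (p q : ℝ × ℝ) : ℝ :=
  if p.2 = 0 ∧ q.2 = 0 then 4 * |p.1 - q.1| / (3 * lam)
  else if p.1 = 0 ∧ q.1 = 0 then |p.2 - q.2| / lam
  else if p.2 = 0 then 4 * p.1 / (3 * lam) + q.2 / lam
  else 4 * q.1 / (3 * lam) + p.2 / lam

lemma mod_AA (lam : ℝ) (p q : ℝ × ℝ) (hp : p.2 = 0) (hq : q.2 = 0) :
    exampleModular lam p q = 4 * |p.1 - q.1| / (3 * lam) := by
  simp [exampleModular, hp, hq]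

lemma mod_BB (lam : ℝ) (p q : ℝ × ℝ) (hp : p.1 = 0) (hp2 : p.2 ≠ 0) (hq : q.1 = 0) :
    exampleModular lam p q = |p.2 - q.2| / lam := by
  simp [exampleModular, hp, hq, hp2]

lemma mod_AB (lam : ℝ) (p q : ℝ × ℝ) (hp : p.2 = 0) (hp1 : p.1 ≠ 0) (hq2 : q.2 ≠ 0) :
    exampleModular lam p q = 4 * p.1 / (3 * lam) + q.2 / lam := by
  simp [exampleModular, hp, hq2, hp1]

lemma mod_BA (lam : ℝ) (p q : ℝ × ℝ) (hp1 : p.1 = 0) (hp2 : p.2 ≠ 0) (hq : q.2 = 0)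
    (hq1 : q.1 ≠ 0) :
    exampleModular lam p q = 4 * q.1 / (3 * lam) + p.2 / lam := by
  simp [exampleModular, hp1, hp2, hq, hq1]

/-- Every modular Cauchy sequence in `X = exampleSet` (with the
modular `exampleModular`) eventually lies in one of the two segments, and
consequently `X` is complete: every modular Cauchy sequence is modular convergent
to some point of `X`. -/
theorem exampleModular_cauchy_eventually_in_segment_and_complete
    (u : ℕ → ℝ × ℝ) (hu : ∀ n, u n ∈ exampleSet)
    (hcauchy : ∀ lam : ℝ, 0 < lam →
      Filter.Tendsto (fun p : ℕ × ℕ => exampleModular lam (u p.1) (u p.2))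
        Filter.atTop (nhds 0)) :
    ((∃ N : ℕ, ∀ n > N, (u n).2 = 0 ∧ 1 / 2 ≤ (u n).1 ∧ (u n).1 ≤ 1) ∨
     (∃ N : ℕ, ∀ n > N, (u n).1 = 0 ∧ 1 / 2 ≤ (u n).2 ∧ (u n).2 ≤ 1)) ∧
    (∃ x ∈ exampleSet, ∀ lam : ℝ, 0 < lam →
      Filter.Tendsto (fun n => exampleModular lam (u n) x)
        Filter.atTop (nhds 0)) := by
  have h1 := hcauchy 1 one_pos
  rw [Metric.tendsto_atTop] at h1
  have hM : ∀ ε : ℝ, 0 < ε → ∃ N : ℕ, ∀ m n : ℕ, N ≤ m → N ≤ n →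
      |exampleModular 1 (u m) (u n)| < ε := by
    intro ε hε
    obtain ⟨P, hP⟩ := h1 ε hε
    refine ⟨max P.1 P.2, fun m n hm hn => ?_⟩
    have := hP (m, n) ⟨le_trans (le_max_left _ _) hm, le_trans (le_max_right _ _) hn⟩
    simpa [Real.dist_eq] using this
  obtain ⟨N₀, hN₀⟩ := hM 1 one_pos
  rcases hu N₀ with hA | hB
  · -- horizontal segment case
    have hall : ∀ n, N₀ ≤ n → (u n).2 = 0 ∧ 1 / 2 ≤ (u n).1 ∧ (u n).1 ≤ 1 := by
      intro n hn
      rcases hu n with h | h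
      · exact h
      · exfalso
        have hne : (u n).2 ≠ 0 := ne_of_gt (by linarith [h.2.1])
        have hne1 : (u N₀).1 ≠ 0 := ne_of_gt (by linarith [hA.2.1])
        have heq := mod_AB 1 (u N₀) (u n) hA.1 hne1 hne
        have hb := hN₀ N₀ n le_rfl hn
        rw [heq] at hb
        have hge : (1:ℝ) ≤ 4 * (u N₀).1 / (3 * 1) + (u n).2 / 1 := by
          have := hA.2.1; have := h.2.1; linarith
        have := le_abs_self (4 * (u N₀).1 / (3 * 1) + (u n).2 / 1)
        linarith
    have hv : CauchySeq (fun n => (u (n + N₀)).1) := by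
      rw [Metric.cauchySeq_iff]
      intro ε hε
      obtain ⟨N₁, hN₁⟩ := hM ε hε
      refine ⟨N₁, fun m hm n hn => ?_⟩
      have key := hN₁ (m + N₀) (n + N₀) (le_trans hm (Nat.le_add_right _ _))
        (le_trans hn (Nat.le_add_right _ _))
      rw [mod_AA 1 _ _ (hall _ (Nat.le_add_left _ _)).1 (hall _ (Nat.le_add_left _ _)).1] at key
      have h0 : (0:ℝ) ≤ 4 * |(u (m + N₀)).1 - (u (n + N₀)).1| / (3 * 1) := by positivity
      rw [abs_of_nonneg h0] at key
      rw [Real.dist_eq]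
      have := abs_nonneg ((u (m + N₀)).1 - (u (n + N₀)).1)
      linarith
    obtain ⟨a, ha⟩ := cauchySeq_tendsto_of_complete hv
    have ha' : Filter.Tendsto (fun n => (u n).1) Filter.atTop (nhds a) :=
      (Filter.tendsto_add_atTop_iff_nat N₀).mp ha
    have h2 : 1 / 2 ≤ a :=
      ge_of_tendsto ha' (Filter.eventually_atTop.mpr ⟨N₀, fun n hn => (hall n hn).2.1⟩)
    have h3 : a ≤ 1 :=
      le_of_tendsto ha' (Filter.eventually_atTop.mpr ⟨N₀, fun n hn => (hall n hn).2.2⟩)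
    refine ⟨Or.inl ⟨N₀, fun n hn => hall n (le_of_lt hn)⟩, ((a, 0) : ℝ × ℝ),
      Or.inl ⟨rfl, h2, h3⟩, fun lam hlam => ?_⟩
    have habs : Filter.Tendsto (fun n => 4 * |(u n).1 - a| / (3 * lam)) Filter.atTop
        (nhds (4 * |a - a| / (3 * lam))) :=
      (((ha'.sub_const a).abs.const_mul 4).div_const (3 * lam))
    simp only [sub_self, abs_zero, mul_zero, zero_div] at habs
    refine habs.congr' ?_
    filter_upwards [Filter.eventually_atTop.mpr ⟨N₀, fun n (hn : N₀ ≤ n) => hall n hn⟩] with n hn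
    exact (mod_AA lam (u n) (a, 0) hn.1 rfl).symm
  · -- vertical segment case
    have hall : ∀ n, N₀ ≤ n → (u n).1 = 0 ∧ 1 / 2 ≤ (u n).2 ∧ (u n).2 ≤ 1 := by
      intro n hn
      rcases hu n with h | h
      · exfalso
        have hne : (u N₀).2 ≠ 0 := ne_of_gt (by linarith [hB.2.1])
        have hne1 : (u n).1 ≠ 0 := ne_of_gt (by linarith [h.2.1])
        have heq := mod_BA 1 (u N₀) (u n) hB.1 hne h.1 hne1
        have hb := hN₀ N₀ n le_rfl hn
        rw [heq] at hb
        have hge : (1:ℝ) ≤ 4 * (u n).1 / (3 * 1) + (u N₀).2 / 1 := by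
          have := hB.2.1; have := h.2.1; linarith
        have := le_abs_self (4 * (u n).1 / (3 * 1) + (u N₀).2 / 1)
        linarith
      · exact h
    have hv : CauchySeq (fun n => (u (n + N₀)).2) := by
      rw [Metric.cauchySeq_iff]
      intro ε hε
      obtain ⟨N₁, hN₁⟩ := hM ε hε
      refine ⟨N₁, fun m hm n hn => ?_⟩
      have key := hN₁ (m + N₀) (n + N₀) (le_trans hm (Nat.le_add_right _ _))
        (le_trans hn (Nat.le_add_right _ _))
      have hm2 : (u (m + N₀)).2 ≠ 0 := ne_of_gt (by linarith [(hall (m + N₀) (Nat.le_add_left _ _)).2.1])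
      rw [mod_BB 1 _ _ (hall _ (Nat.le_add_left _ _)).1 hm2
        (hall _ (Nat.le_add_left _ _)).1] at key
      have h0 : (0:ℝ) ≤ |(u (m + N₀)).2 - (u (n + N₀)).2| / 1 := by positivity
      rw [abs_of_nonneg h0] at key
      rw [Real.dist_eq]
      linarith
    obtain ⟨b, hb⟩ := cauchySeq_tendsto_of_complete hv
    have hb' : Filter.Tendsto (fun n => (u n).2) Filter.atTop (nhds b) :=
      (Filter.tendsto_add_atTop_iff_nat N₀).mp hb
    have h2 : 1 / 2 ≤ b :=
      ge_of_tendsto hb' (Filter.eventually_atTop.mpr ⟨N₀, fun n hn => (hall n hn).2.1⟩)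
    have h3 : b ≤ 1 :=
      le_of_tendsto hb' (Filter.eventually_atTop.mpr ⟨N₀, fun n hn => (hall n hn).2.2⟩)
    refine ⟨Or.inr ⟨N₀, fun n hn => hall n (le_of_lt hn)⟩, ((0, b) : ℝ × ℝ),
      Or.inr ⟨rfl, h2, h3⟩, fun lam hlam => ?_⟩
    have habs : Filter.Tendsto (fun n => |(u n).2 - b| / lam) Filter.atTop
        (nhds (|b - b| / lam)) :=
      ((hb'.sub_const b).abs.div_const lam)
    simp only [sub_self, abs_zero, zero_div] at habs
    refine habs.congr' ?_
    filter_upwards [Filter.eventually_atTop.mpr ⟨N₀, fun n (hn : N₀ ≤ n) => hall n hn⟩] with n hn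
    have hne : (u n).2 ≠ 0 := ne_of_gt (by linarith [hn.2.1])
    exact (mod_BB lam (u n) (0, b) hn.1 hne rfl).symm
end

section
/- Let X = {(a,0) ∈ ℝ² : 1/2 ≤ a ≤ 1} ∪ {(0,b) ∈ ℝ² : 1/2 ≤ b ≤ 1} with the modular metric w given by w_λ((a₁,0),(a₂,0)) = 4|a₁−a₂|/(3λ), w_λ((0,b₁),(0,b₂)) = |b₁−b₂|/λ, and w_λ((a,0),(0,b)) = w_λ((0,b),(a,0)) = 4a/(3λ) + b/λ, and define T : X → X by T((a,0)) = (0,a) and T((0,b)) = (b/2, 0). Then T is a contraction with constant 3/4: for all x, y ∈ X and all λ > 0, w_λ(Tx, Ty) ≤ (3/4)·w_λ(x, y). -/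
/-- The map `T((a,0)) = (0,a)`, `T((0,b)) = (b/2, 0)`. -/
noncomputable def exampleMap (p : ℝ × ℝ) : ℝ × ℝ :=
  if p.2 = 0 then (0, p.1) else (p.2 / 2, 0)

/-- On `X = exampleSet`, the map `T = exampleMap` is a contraction
with constant `3/4` for the modular `exampleModular`: for all `x, y ∈ X` and all
`λ > 0`, `w_λ(Tx, Ty) ≤ (3/4) · w_λ(x, y)`. -/
theorem exampleMap_is_contraction :
    ∀ x ∈ exampleSet, ∀ y ∈ exampleSet, ∀ lam : ℝ, 0 < lam →
      exampleModular lam (exampleMap x) (exampleMap y) ≤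
        3 / 4 * exampleModular lam x y := by
  rintro ⟨a1, a2⟩ (⟨h1, h2, h3⟩ | ⟨h1, h2, h3⟩) ⟨b1, b2⟩ (⟨g1, g2, g3⟩ | ⟨g1, g2, g3⟩)
      lam hlam <;> subst h1 <;> subst g1 <;> dsimp at h2 h3 g2 g3
  · -- HH
    have ha : a1 ≠ 0 := by linarith
    have hb : b1 ≠ 0 := by linarith
    simp only [exampleMap, exampleModular, ha, hb]
    norm_num
    have he : 3 / 4 * (4 * |a1 - b1| / (3 * lam)) = |a1 - b1| / lam := by
      field_simp
    rw [he]
    split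
    · positivity
    · exact le_refl _
  · -- HV
    have ha : a1 ≠ 0 := by linarith
    have hb : b2 ≠ 0 := by linarith
    simp only [exampleMap, exampleModular, ha, hb]
    norm_num [ha, hb]
    have hd : 3 * (4 * a1 / (3 * lam) + b2 / lam) / 4 -
        (4 * (b2 / 2) / (3 * lam) + a1 / lam) = b2 / (12 * lam) := by
      field_simp; ring
    have hnn : (0:ℝ) ≤ b2 / (12 * lam) := by positivity
    linarith
  · -- VH
    have ha : a2 ≠ 0 := by linarith
    have hb : b1 ≠ 0 := by linarith
    simp only [exampleMap, exampleModular, ha, hb]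
    norm_num [ha, hb]
    have hd : 3 * (4 * b1 / (3 * lam) + a2 / lam) / 4 -
        (4 * (a2 / 2) / (3 * lam) + b1 / lam) = a2 / (12 * lam) := by
      field_simp; ring
    have hnn : (0:ℝ) ≤ a2 / (12 * lam) := by positivity
    linarith
  · -- VV
    have ha : a2 ≠ 0 := by linarith
    have hb : b2 ≠ 0 := by linarith
    simp only [exampleMap, exampleModular, ha, hb]
    norm_num [ha, hb]
    have h2' : |a2 / 2 - b2 / 2| = |a2 - b2| / 2 := by
      rw [show a2 / 2 - b2 / 2 = (a2 - b2) / 2 by ring, abs_div]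
      norm_num
    rw [h2']
    have hd : 3 / 4 * (|a2 - b2| / lam) - 4 * (|a2 - b2| / 2) / (3 * lam) =
        |a2 - b2| / (12 * lam) := by field_simp; ring
    have hnn : (0:ℝ) ≤ |a2 - b2| / (12 * lam) := by positivity
    linarith
end

section
/- Let X = {(a,0) ∈ ℝ² : 1/2 ≤ a ≤ 1} ∪ {(0,b) ∈ ℝ² : 1/2 ≤ b ≤ 1} and define T : X → X by T((a,0)) = (0,a) and T((0,b)) = (b/2, 0). Then T has no fixed point in X. (Together with the facts that w_λ((a₁,0),(a₂,0)) = 4|a₁−a₂|/(3λ), w_λ((0,b₁),(0,b₂)) = |b₁−b₂|/λ, w_λ((a,0),(0,b)) = 4a/(3λ) + b/λ defines a complete modular metric on X and that T is a 3/4-contraction for this w, this shows that the fixed point theorem of Mongkolkeha, Sintunavarat and Kumam for contractions in complete modular metric spaces is false.) -/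
/-- The map `T = exampleMap` (given by `T((a,0)) = (0,a)` and
`T((0,b)) = (b/2,0)`) has no fixed point in `X = exampleSet`. -/
theorem exampleMap_has_no_fixed_point :
    ∀ p ∈ exampleSet, exampleMap p ≠ p := by
  rintro ⟨a, b⟩ (⟨h0, h1, h2⟩ | ⟨h0, h1, h2⟩) heq <;>
    simp only [exampleMap] at heq
  · rw [if_pos h0] at heq
    have : (0 : ℝ) = a := congrArg Prod.fst heq
    linarith
  · by_cases hb : b = 0
    · linarith
    · rw [if_neg hb] at heq
      have : (0 : ℝ) = b := congrArg Prod.snd heq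
      linarith
end
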